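/- arXiv:2308.03439 — 4 statements merged into one kernel-verified Lean document; each statement's English description precedes it below -/
import Mathlib

section
/- Let O be a 2S×2S real orthogonal matrix, let 1 ≤ i ≤ S and 1 ≤ j ≤ 2S. Then there exists a 2S×2S real orthogonal symplectic matrix W and a nonzero real constant λ such that columns 2i−1 and 2i of the product OW are proportional with ratio λ in every row except possibly row j; that is, (OW)_{l,2i} = λ·(OW)_{l,2i−1} for all rows l ≠ j. -/
open Matrix

/-- The standard symplectic form `Ω` on `2S` phase-space coordinates ordered
`(q₁,p₁,…,q_S,p_S)`: the direct sum of `S` copies of `[[0,1],[-1,0]]`. -/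
def Omega (S : ℕ) : Matrix (Fin (2 * S)) (Fin (2 * S)) ℝ :=
  Matrix.of fun i j =>
    if i.val + 1 = j.val ∧ i.val % 2 = 0 then (1 : ℝ)
    else if j.val + 1 = i.val ∧ j.val % 2 = 0 then -1 else 0

namespace OSAux

def sig (S : ℕ) (k : Fin (2 * S)) : Fin (2 * S) :=
  if h : k.val % 2 = 0 then ⟨k.val + 1, by have := k.isLt; omega⟩
  else ⟨k.val - 1, by have := k.isLt; omega⟩

noncomputable def sgn (S : ℕ) (k : Fin (2 * S)) : ℝ :=
  if k.val % 2 = 0 then 1 else -1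

lemma sig_val (S : ℕ) (k : Fin (2 * S)) :
    (sig S k).val = if k.val % 2 = 0 then k.val + 1 else k.val - 1 := by
  unfold sig; split <;> rfl

lemma sig_sig (S : ℕ) (k : Fin (2 * S)) : sig S (sig S k) = k := by
  have := k.isLt
  apply Fin.ext
  rw [sig_val, sig_val]
  split_ifs <;> omega

lemma sgn_sig (S : ℕ) (k : Fin (2 * S)) : sgn S (sig S k) = -sgn S k := by
  have := k.isLt
  unfold sgn
  rw [sig_val]
  split_ifs <;> first | (exfalso; omega) | norm_num

lemma sgn_sq (S : ℕ) (k : Fin (2 * S)) : sgn S k * sgn S k = 1 := by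
  unfold sgn; split <;> norm_num

lemma Omega_apply (S : ℕ) (i k : Fin (2 * S)) :
    Omega S i k = if k = sig S i then sgn S i else 0 := by
  have hi := i.isLt; have hk := k.isLt
  unfold Omega sgn
  simp only [of_apply, Fin.ext_iff, sig_val]
  split_ifs <;> first | (exfalso; omega) | norm_num

lemma Omega_mulVec (S : ℕ) (v : Fin (2 * S) → ℝ) (k : Fin (2 * S)) :
    (Omega S).mulVec v k = sgn S k * v (sig S k) := by
  unfold Matrix.mulVec
  simp only [dotProduct, Omega_apply, ite_mul, zero_mul]
  rw [Finset.sum_ite_eq' Finset.univ (sig S k) (fun m => sgn S k * v m)]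
  simp

lemma mulVec_Omega_eq (S : ℕ) (A : Matrix (Fin (2*S)) (Fin (2*S)) ℝ) (i l : Fin (2*S)) :
    (A * Omega S) i l = - sgn S l * A i (sig S l) := by
  rw [Matrix.mul_apply]
  have h : ∀ k, Omega S k l = if k = sig S l then -sgn S l else 0 := by
    intro k
    rw [Omega_apply]
    by_cases h : l = sig S k
    · rw [if_pos h, if_pos (by rw [h, sig_sig]), h, sgn_sig]; ring
    · rw [if_neg h, if_neg (by intro hk; apply h; rw [hk, sig_sig])]
  simp only [h, mul_ite, mul_zero]
  rw [Finset.sum_ite_eq' Finset.univ (sig S l) (fun m => A i m * (-sgn S l))]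
  simp [mul_comm]

lemma Omega_transpose (S : ℕ) : (Omega S)ᵀ = -(Omega S) := by
  ext i k
  rw [transpose_apply, Omega_apply, neg_apply, Omega_apply]
  by_cases h : i = sig S k
  · rw [if_pos h, if_pos (by rw [h, sig_sig]), h, sgn_sig]; ring
  · rw [if_neg h, if_neg (by intro hk; apply h; rw [hk, sig_sig]), neg_zero]

lemma Omega_mul_Omega (S : ℕ) : Omega S * Omega S = -1 := by
  ext i k
  rw [Matrix.mul_apply]
  have h : ∀ m, Omega S i m * Omega S m k
      = if m = sig S i then sgn S i * Omega S m k else 0 := by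
    intro m; rw [Omega_apply S i m]; split_ifs <;> simp
  simp only [h]
  rw [Finset.sum_ite_eq' Finset.univ (sig S i) (fun m => sgn S i * Omega S m k)]
  simp only [Finset.mem_univ, if_true, Omega_apply, sig_sig, sgn_sig]
  by_cases h : k = i
  · simp [h, sgn_sq]
  · simp [h, Matrix.one_apply, Ne.symm h]

end OSAux


namespace OSAux

variable {n : Type*} [Fintype n] [DecidableEq n]

lemma vmv_mul (A : Matrix n n ℝ) (a b : n → ℝ) :
    vecMulVec a b * A = vecMulVec a (Aᵀ.mulVec b) := by
  ext i j
  simp only [Matrix.mul_apply, vecMulVec_apply, Matrix.mulVec, dotProduct,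
    transpose_apply, Finset.mul_sum]
  exact Finset.sum_congr rfl fun k _ => by ring

lemma mul_vmv (A : Matrix n n ℝ) (a b : n → ℝ) :
    A * vecMulVec a b = vecMulVec (A.mulVec a) b := by
  ext i j
  simp only [Matrix.mul_apply, vecMulVec_apply, Matrix.mulVec, dotProduct,
    Finset.sum_mul]
  exact Finset.sum_congr rfl fun k _ => by ring

lemma vmv_mul_vmv (a b c d : n → ℝ) :
    vecMulVec a b * vecMulVec c d = (b ⬝ᵥ c) • vecMulVec a d := by
  ext i j
  simp only [Matrix.mul_apply, vecMulVec_apply, Matrix.smul_apply, smul_eq_mul,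
    dotProduct, Finset.sum_mul]
  exact Finset.sum_congr rfl fun k _ => by ring

lemma vmv_mulVec (a b v : n → ℝ) :
    (vecMulVec a b).mulVec v = (b ⬝ᵥ v) • a := by
  ext i
  simp only [Matrix.mulVec, vecMulVec_apply, dotProduct, Pi.smul_apply,
    smul_eq_mul, Finset.sum_mul]
  exact Finset.sum_congr rfl fun k _ => by ring

lemma vmv_transpose (a b : n → ℝ) : (vecMulVec a b)ᵀ = vecMulVec b a := by
  ext i j; simp [vecMulVec_apply, mul_comm]

lemma vmv_smul_left (r : ℝ) (a b : n → ℝ) :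
    vecMulVec (r • a) b = r • vecMulVec a b := by
  ext i j; simp [vecMulVec_apply, mul_assoc]

lemma vmv_smul_right (r : ℝ) (a b : n → ℝ) :
    vecMulVec a (r • b) = r • vecMulVec a b := by
  ext i j; simp [vecMulVec_apply]; ring

lemma vmv_neg_left (a b : n → ℝ) : vecMulVec (-a) b = -vecMulVec a b := by
  ext i j; simp [vecMulVec_apply]

lemma vmv_neg_right (a b : n → ℝ) : vecMulVec a (-b) = -vecMulVec a b := by
  ext i j; simp [vecMulVec_apply]

/-- scalar helper -/
lemma exists_phase (α β : ℝ) :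
    ∃ p₁ p₂ : ℝ, p₁ ^ 2 + p₂ ^ 2 = 1 ∧ p₁ * β + p₂ * α = 0 ∧ p₁ * α - p₂ * β ≤ 0 := by
  by_cases h : α = 0 ∧ β = 0
  · exact ⟨1, 0, by norm_num, by simp [h.1, h.2], by simp [h.1, h.2]⟩
  · have hr2 : 0 < α ^ 2 + β ^ 2 := by
      rcases not_and_or.mp h with h' | h' <;> positivity
    set r := Real.sqrt (α ^ 2 + β ^ 2) with hr
    have hrpos : 0 < r := Real.sqrt_pos.mpr hr2
    have hrsq : r ^ 2 = α ^ 2 + β ^ 2 := Real.sq_sqrt hr2.le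
    refine ⟨-α / r, β / r, ?_, ?_, ?_⟩
    · field_simp
      linarith [hrsq]
    · field_simp; ring
    · have : -α / r * α - β / r * β = -(α ^ 2 + β ^ 2) / r := by ring
      rw [this]
      apply div_nonpos_of_nonpos_of_nonneg (by linarith) hrpos.le
  
set_option maxHeartbeats 1600000 in
/-- Key construction: a real "unitary" (orthogonal, commuting with the
complex structure `J`) mapping a given unit vector `x` to a given unit
vector `w`. -/
lemma exists_unitary (J : Matrix n n ℝ) (hJT : Jᵀ = -J) (hJJ : J * J = -1)
    (x w : n → ℝ) (hx : x ⬝ᵥ x = 1) (hw : w ⬝ᵥ w = 1) :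
    ∃ W : Matrix n n ℝ, Wᵀ * W = 1 ∧ W * J = J * W ∧ W.mulVec x = w := by
  classical
  have hJTJ : Jᵀ * J = 1 := by rw [hJT, neg_mul, hJJ, neg_neg]
  -- inner-product facts for J
  have hskew : ∀ a b : n → ℝ, a ⬝ᵥ J.mulVec b = -(J.mulVec a ⬝ᵥ b) := by
    intro a b
    rw [dotProduct_mulVec, ← mulVec_transpose, hJT]
    simp [neg_mulVec]
  have hiso : ∀ a b : n → ℝ, J.mulVec a ⬝ᵥ J.mulVec b = a ⬝ᵥ b := by
    intro a b
    rw [dotProduct_mulVec, ← mulVec_transpose, mulVec_mulVec, hJTJ, one_mulVec]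
  have hself : ∀ a : n → ℝ, a ⬝ᵥ J.mulVec a = 0 := by
    intro a
    have h := hskew a a
    have h2 : J.mulVec a ⬝ᵥ a = a ⬝ᵥ J.mulVec a := dotProduct_comm _ _
    rw [h2] at h
    linarith
  set y := J.mulVec x with hy
  have hJy : J.mulVec y = -x := by
    rw [hy, mulVec_mulVec, hJJ, neg_mulVec, one_mulVec]
  have hyy : y ⬝ᵥ y = 1 := by rw [hy, hiso, hx]
  have hxy : x ⬝ᵥ y = 0 := hself x
  have hyx : y ⬝ᵥ x = 0 := by rw [dotProduct_comm]; exact hxy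
  set α := x ⬝ᵥ w with hα
  set β := x ⬝ᵥ J.mulVec w with hβ
  obtain ⟨p₁, p₂, hp, hcon, ht0⟩ := exists_phase α β
  set x' := p₁ • x + p₂ • y with hx'
  set t := p₁ * α - p₂ * β with htdef
  have hyw : y ⬝ᵥ w = -β := by
    have h := hskew x w
    rw [← hβ, ← hy] at h
    linarith
  have hyJw : y ⬝ᵥ J.mulVec w = α := by rw [hy, hiso]
  have hdot : ∀ z : n → ℝ, x' ⬝ᵥ z = p₁ * (x ⬝ᵥ z) + p₂ * (y ⬝ᵥ z) := by
    intro z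
    rw [hx', add_dotProduct, smul_dotProduct, smul_dotProduct]
    simp
  have hx'x' : x' ⬝ᵥ x' = 1 := by
    rw [hx', dotProduct_add, dotProduct_smul, dotProduct_smul, hdot, hdot,
      hx, hxy, hyx, hyy]
    simp only [smul_eq_mul]
    nlinarith [hp]
  have hx'w : x' ⬝ᵥ w = t := by rw [hdot, hyw, htdef]; ring
  have hx'Jw : x' ⬝ᵥ J.mulVec w = 0 := by rw [hdot, hyJw]; linarith [hcon]
  have hJx' : J.mulVec x' = p₁ • y - p₂ • x := by
    rw [hx', mulVec_add, mulVec_smul, mulVec_smul, ← hy, hJy]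
    module
  have ht1 : t ≤ 0 := ht0
  set ν := Real.sqrt (2 - 2 * t) with hν
  have hν2 : ν ^ 2 = 2 - 2 * t := Real.sq_sqrt (by linarith)
  have hνpos : 0 < ν := Real.sqrt_pos.mpr (by linarith)
  set u := ν⁻¹ • (x' - w) with hu
  set v := J.mulVec u with hv
  have hJu : J.mulVec u = v := hv.symm
  have hJv : J.mulVec v = -u := by
    rw [hv, mulVec_mulVec, hJJ, neg_mulVec, one_mulVec]
  have hwx' : w ⬝ᵥ x' = t := by rw [dotProduct_comm]; exact hx'w
  have hdd : (x' - w) ⬝ᵥ (x' - w) = 2 - 2 * t := by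
    rw [sub_dotProduct, dotProduct_sub, dotProduct_sub, hx'x', hx'w, hwx', hw]
    ring
  have hνne : ν ≠ 0 := ne_of_gt hνpos
  have huu : u ⬝ᵥ u = 1 := by
    rw [hu, smul_dotProduct, dotProduct_smul, hdd]
    simp only [smul_eq_mul]
    rw [← hν2]
    field_simp
  have hvv : v ⬝ᵥ v = 1 := by rw [hv, hiso]; exact huu
  have huv : u ⬝ᵥ v = 0 := hself u
  have hvu : v ⬝ᵥ u = 0 := by rw [dotProduct_comm]; exact huv
  have hux' : u ⬝ᵥ x' = ν⁻¹ * (1 - t) := by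
    rw [hu, smul_dotProduct, sub_dotProduct, hx'x', hwx']
    simp [smul_eq_mul]
  have hx'Jx' : x' ⬝ᵥ J.mulVec x' = 0 := hself x'
  have hwJx' : w ⬝ᵥ J.mulVec x' = 0 := by
    have h := hskew w x'
    have h2 : J.mulVec w ⬝ᵥ x' = x' ⬝ᵥ J.mulVec w := dotProduct_comm _ _
    rw [h2, hx'Jw] at h
    simpa using h
  have hvx' : v ⬝ᵥ x' = 0 := by
    have h := hskew u x'
    have huJx' : u ⬝ᵥ J.mulVec x' = 0 := by
      rw [hu, smul_dotProduct, sub_dotProduct, hx'Jx', hwJx']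
      simp
    rw [huJx'] at h
    rw [hv]
    linarith
  -- the Householder-type reflection
  set P₁ : Matrix n n ℝ := vecMulVec u u + vecMulVec v v with hP₁
  set H : Matrix n n ℝ := 1 - (2 : ℝ) • P₁ with hH
  have hP₁T : P₁ᵀ = P₁ := by
    rw [hP₁, transpose_add, vmv_transpose, vmv_transpose]
  have hHT : Hᵀ = H := by
    rw [hH, transpose_sub, transpose_one, transpose_smul, hP₁T]
  have hP₁P₁ : P₁ * P₁ = P₁ := by
    rw [hP₁]
    simp only [add_mul, mul_add, vmv_mul_vmv, huu, hvv, huv, hvu, one_smul,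
      zero_smul, add_zero, zero_add]
  have hHH : H * H = 1 := by
    rw [hH]
    simp only [sub_mul, mul_sub, one_mul, mul_one, smul_mul_assoc,
      mul_smul_comm, smul_smul, hP₁P₁]
    module
  have hJvmv : ∀ a b : n → ℝ, J * vecMulVec a b = vecMulVec (J.mulVec a) b :=
    fun a b => mul_vmv J a b
  have hvmvJ : ∀ a b : n → ℝ, vecMulVec a b * J = vecMulVec a (-(J.mulVec b)) := by
    intro a b
    rw [vmv_mul, hJT, neg_mulVec]
  have hHJ : H * J = J * H := by
    have hPJ : P₁ * J = J * P₁ := by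
      rw [hP₁, add_mul, mul_add, hvmvJ, hvmvJ, hJvmv, hJvmv, hJu, hJv,
        neg_neg, vmv_neg_right, vmv_neg_left]
      abel
    rw [hH, sub_mul, mul_sub, one_mul, mul_one, smul_mul_assoc,
      mul_smul_comm, hPJ]
  have hHx' : H.mulVec x' = w := by
    have hPx' : P₁.mulVec x' = (ν⁻¹ * (1 - t)) • u := by
      rw [hP₁, add_mulVec, vmv_mulVec, vmv_mulVec, hux', hvx', zero_smul,
        add_zero]
    rw [hH, sub_mulVec, one_mulVec, smul_mulVec, hPx', hu,
      smul_smul, smul_smul]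
    have hc : (2 : ℝ) * (ν⁻¹ * (1 - t)) * ν⁻¹ = 1 := by
      have hvv2 : ν * ν = 2 - 2 * t := by nlinarith [hν2]
      field_simp
      nlinarith [hvv2]
    rw [hc, one_smul]
    abel
  -- the phase rotation
  set P : Matrix n n ℝ := vecMulVec x x + vecMulVec y y with hP
  set Q : Matrix n n ℝ := vecMulVec y x - vecMulVec x y with hQ
  set a := p₁ - 1 with ha
  set b := p₂ with hb
  set D : Matrix n n ℝ := 1 + a • P + b • Q with hD
  have hPT : Pᵀ = P := by rw [hP, transpose_add, vmv_transpose, vmv_transpose]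
  have hQT : Qᵀ = -Q := by
    rw [hQ, transpose_sub, vmv_transpose, vmv_transpose]
    abel
  have hDT : Dᵀ = 1 + a • P - b • Q := by
    rw [hD, transpose_add, transpose_add, transpose_one, transpose_smul,
      transpose_smul, hPT, hQT, smul_neg]
    abel
  have hPP : P * P = P := by
    rw [hP]
    simp only [add_mul, mul_add, vmv_mul_vmv, hx, hyy, hxy, hyx, one_smul,
      zero_smul, add_zero, zero_add]
  have hPQ : P * Q = Q := by
    rw [hP, hQ]
    simp only [mul_sub, add_mul, vmv_mul_vmv, hx, hyy, hxy, hyx, one_smul,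
      zero_smul]
    abel
  have hQP : Q * P = Q := by
    rw [hP, hQ]
    simp only [sub_mul, mul_add, vmv_mul_vmv, hx, hyy, hxy, hyx, one_smul,
      zero_smul]
    abel
  have hQQ : Q * Q = -P := by
    rw [hP, hQ]
    simp only [sub_mul, mul_sub, vmv_mul_vmv, hx, hyy, hxy, hyx, one_smul,
      zero_smul]
    abel
  have hsc : a * a + 2 * a + b * b = 0 := by
    rw [ha, hb]; nlinarith [hp]
  have hDTD : Dᵀ * D = 1 := by
    have key : Dᵀ * D = 1 + (a * a + 2 * a + b * b) • P := by
      rw [hDT, hD]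
      simp only [add_mul, sub_mul, mul_add, mul_sub, one_mul, mul_one,
        smul_mul_assoc, mul_smul_comm, smul_smul, hPP, hPQ, hQP, hQQ, smul_neg]
      module
    rw [key, hsc, zero_smul, add_zero]
  have hDx : D.mulVec x = x' := by
    have hPx : P.mulVec x = x := by
      rw [hP, add_mulVec, vmv_mulVec, vmv_mulVec, hx, hyx, one_smul, zero_smul,
        add_zero]
    have hQx : Q.mulVec x = y := by
      rw [hQ, sub_mulVec, vmv_mulVec, vmv_mulVec, hx, hyx, one_smul, zero_smul,
        sub_zero]
    rw [hD, add_mulVec, add_mulVec, one_mulVec, smul_mulVec,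
      smul_mulVec, hPx, hQx, hx', ha, hb]
    module
  have hDJ : D * J = J * D := by
    have hJP : J * P = Q := by
      rw [hP, hQ, mul_add, hJvmv, hJvmv, ← hy, hJy, vmv_neg_left]
      abel
    have hPJ : P * J = Q := by
      rw [hP, hQ, add_mul, hvmvJ, hvmvJ, ← hy, hJy, neg_neg, vmv_neg_right]
      abel
    have hJQ : J * Q = -P := by
      rw [hQ, hP, mul_sub, hJvmv, hJvmv, ← hy, hJy, vmv_neg_left]
      abel
    have hQJ : Q * J = -P := by
      rw [hQ, hP, sub_mul, hvmvJ, hvmvJ, ← hy, hJy, neg_neg, vmv_neg_right]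
      abel
    rw [hD, add_mul, add_mul, mul_add, mul_add, one_mul, mul_one,
      smul_mul_assoc, smul_mul_assoc, mul_smul_comm, mul_smul_comm,
      hJP, hPJ, hJQ, hQJ]
  refine ⟨H * D, ?_, ?_, ?_⟩
  · rw [transpose_mul, hHT, mul_assoc, ← mul_assoc H, hHH, one_mul, hDTD]
  · rw [mul_assoc, hDJ, ← mul_assoc, hHJ, mul_assoc]
  · rw [← mulVec_mulVec, hDx, hHx']

end OSAux

set_option linter.unusedSectionVars false

/-- A `2S × 2S` real matrix is orthogonal symplectic if `WᵀW = 1` and `WᵀΩW = Ω`. -/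
def IsOrthoSymp (S : ℕ) (W : Matrix (Fin (2 * S)) (Fin (2 * S)) ℝ) : Prop :=
  Wᵀ * W = 1 ∧ Wᵀ * Omega S * W = Omega S

set_option maxHeartbeats 1600000 in
/-- For any `2S × 2S` real orthogonal `O`, any mode `i` and any
row `j`, there is an orthogonal symplectic `W` and a nonzero `λ` such that columns
`2i-1` and `2i` of `O * W` are proportional with ratio `λ` in every row except
possibly row `j`. (Indices are `0`-based: the mode-`i` columns are `2i` and `2i+1`.) -/
theorem exists_ortho_symp_cols_proportional (S : ℕ)
    (O : Matrix (Fin (2 * S)) (Fin (2 * S)) ℝ) (hO : Oᵀ * O = 1)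
    (i : Fin S) (j : Fin (2 * S)) :
    ∃ (W : Matrix (Fin (2 * S)) (Fin (2 * S)) ℝ) (lam : ℝ),
      IsOrthoSymp S W ∧ lam ≠ 0 ∧
      ∀ l : Fin (2 * S), l ≠ j →
        (O * W) l ⟨2 * i.val + 1, by have := i.isLt; omega⟩
          = lam * (O * W) l ⟨2 * i.val, by have := i.isLt; omega⟩ := by
  classical
  set J : Matrix (Fin (2 * S)) (Fin (2 * S)) ℝ := -(Omega S) with hJdef
  have hJT : Jᵀ = -J := by
    rw [hJdef, transpose_neg, OSAux.Omega_transpose, neg_neg]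
  have hJJ : J * J = -1 := by
    rw [hJdef, neg_mul_neg, OSAux.Omega_mul_Omega]
  have hJTJ : Jᵀ * J = 1 := by rw [hJT, neg_mul, hJJ, neg_neg]
  have hskew : ∀ a b : Fin (2 * S) → ℝ, a ⬝ᵥ J.mulVec b = -(J.mulVec a ⬝ᵥ b) := by
    intro a b
    rw [dotProduct_mulVec, ← mulVec_transpose, hJT]
    simp [neg_mulVec]
  have hiso : ∀ a b : Fin (2 * S) → ℝ, J.mulVec a ⬝ᵥ J.mulVec b = a ⬝ᵥ b := by
    intro a b
    rw [dotProduct_mulVec, ← mulVec_transpose, mulVec_mulVec, hJTJ, one_mulVec]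
  have hself : ∀ a : Fin (2 * S) → ℝ, a ⬝ᵥ J.mulVec a = 0 := by
    intro a
    have h := hskew a a
    have h2 : J.mulVec a ⬝ᵥ a = a ⬝ᵥ J.mulVec a := dotProduct_comm _ _
    rw [h2] at h
    linarith
  have hOOT : O * Oᵀ = 1 := mul_eq_one_comm.mp hO
  have hiS := i.isLt
  set k0 : Fin (2 * S) := ⟨2 * i.val, by omega⟩ with hk0
  set k1 : Fin (2 * S) := ⟨2 * i.val + 1, by omega⟩ with hk1
  set x : Fin (2 * S) → ℝ := Pi.single k0 1 with hxdef
  have hx : x ⬝ᵥ x = 1 := by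
    rw [hxdef, dotProduct_single, Pi.single_eq_same, mul_one]
  have hsig0 : OSAux.sig S k0 = k1 := by
    apply Fin.ext
    rw [OSAux.sig_val, hk0, hk1]
    simp only []
    rw [if_pos (by omega)]
  have hsig1 : OSAux.sig S k1 = k0 := by
    apply Fin.ext
    rw [OSAux.sig_val, hk0, hk1]
    simp only []
    rw [if_neg (by omega)]
    omega
  have hJx : J.mulVec x = Pi.single k1 1 := by
    funext k
    rw [hJdef, neg_mulVec, Pi.neg_apply, OSAux.Omega_mulVec]
    by_cases h : k = k1
    · subst h
      rw [hsig1, hxdef, Pi.single_eq_same, Pi.single_eq_same]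
      have : OSAux.sgn S k1 = -1 := by
        rw [OSAux.sgn, if_neg (by rw [hk1]; simp only []; omega)]
      rw [this]; ring
    · have hne : OSAux.sig S k ≠ k0 := by
        intro hc
        apply h
        rw [← OSAux.sig_sig S k, hc, hsig0]
      rw [hxdef, Pi.single_eq_of_ne hne, Pi.single_eq_of_ne h, mul_zero, neg_zero]
  set e : Fin (2 * S) → ℝ := Pi.single j 1 with hedef
  set c : Fin (2 * S) → ℝ := Oᵀ.mulVec e with hcdef
  have hOc : O.mulVec c = e := by
    rw [hcdef, mulVec_mulVec, hOOT, one_mulVec]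
  have hcc : c ⬝ᵥ c = 1 := by
    rw [hcdef]
    rw [dotProduct_mulVec, vecMul_transpose]
    rw [show Oᵀ.mulVec e = c from hcdef.symm]
    rw [hOc, hedef, dotProduct_single, Pi.single_eq_same, mul_one]
  have hcJc : c ⬝ᵥ J.mulVec c = 0 := hself c
  have hJcc : J.mulVec c ⬝ᵥ c = 0 := by
    rw [dotProduct_comm]; exact hcJc
  have hJcJc : J.mulVec c ⬝ᵥ J.mulVec c = 1 := by rw [hiso, hcc]
  set s : ℝ := (Real.sqrt 2)⁻¹ with hsdef
  have hs2 : s * s * 2 = 1 := by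
    have h2 : Real.sqrt 2 * Real.sqrt 2 = 2 := Real.mul_self_sqrt (by norm_num)
    rw [hsdef]
    field_simp
    rw [sq, h2]
  set w : Fin (2 * S) → ℝ := s • (c + J.mulVec c) with hwdef
  have hw : w ⬝ᵥ w = 1 := by
    rw [hwdef, smul_dotProduct, dotProduct_smul, dotProduct_add,
      add_dotProduct, add_dotProduct, hcc, hcJc, hJcc, hJcJc]
    simp only [smul_eq_mul]
    linarith [hs2]
  clear_value w
  obtain ⟨W, hWT, hWJ, hWx⟩ := OSAux.exists_unitary J hJT hJJ x w hx hw
  have hWO : W * Omega S = Omega S * W := by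
    have h := hWJ
    rw [hJdef, mul_neg, neg_mul] at h
    exact neg_injective h
  refine ⟨W, 1, ⟨hWT, ?_⟩, one_ne_zero, ?_⟩
  · calc Wᵀ * Omega S * W = Wᵀ * (Omega S * W) := mul_assoc _ _ _
      _ = Wᵀ * (W * Omega S) := by rw [hWO]
      _ = Wᵀ * W * Omega S := (mul_assoc _ _ _).symm
      _ = Omega S := by rw [hWT, one_mul]
  · intro l hl
    have hJw : J.mulVec w = w - (2 * s) • c := by
      have hJJc : J.mulVec (J.mulVec c) = -c := by
        rw [mulVec_mulVec, hJJ, neg_mulVec, one_mulVec]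
      rw [hwdef, mulVec_smul, mulVec_add, hJJc]
      module
    have col0 : (O * W) l k0 = O.mulVec w l := by
      have h1 : (O * W).mulVec x = O.mulVec w := by
        rw [← mulVec_mulVec, hWx]
      have h2 : (O * W).mulVec x l = (O * W) l k0 := by
        rw [hxdef]
        simp [mulVec, dotProduct_single]
      rw [← h2, h1]
    have col1 : (O * W) l k1 = O.mulVec (J.mulVec w) l := by
      have h1 : (O * W).mulVec (Pi.single k1 1) = O.mulVec (J.mulVec w) := by
        rw [← hJx]
        calc (O * W).mulVec (J.mulVec x)
            = O.mulVec (W.mulVec (J.mulVec x)) := (mulVec_mulVec _ O W).symm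
          _ = O.mulVec ((W * J).mulVec x) := by rw [mulVec_mulVec x W J]
          _ = O.mulVec ((J * W).mulVec x) := by rw [hWJ]
          _ = O.mulVec (J.mulVec (W.mulVec x)) := by rw [← mulVec_mulVec x J W]
          _ = O.mulVec (J.mulVec w) := by rw [hWx]
      have h2 : (O * W).mulVec (Pi.single k1 1) l = (O * W) l k1 := by
        simp [mulVec, dotProduct_single]
      rw [← h2, h1]
    have hfin : O.mulVec (J.mulVec w) l = O.mulVec w l := by
      rw [hJw, mulVec_sub, mulVec_smul, hOc, Pi.sub_apply, Pi.smul_apply,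
        hedef, Pi.single_eq_of_ne hl, smul_zero, sub_zero]
    show (O * W) l k1 = 1 * (O * W) l k0
    rw [one_mul, col0, col1, hfin]
end

section
/- Let Γ be a 2S×2S quantum covariance matrix with eigenvalues λ₁ ≥ λ₂ ≥ ... ≥ λ_{2S} listed in non-ascending order. Then the diagonal matrix D_Λ whose j-th diagonal 2×2 block is diag(λ_j, λ_{2S+1−j}) for j = 1,...,S is also a quantum covariance matrix; equivalently, λ_j·λ_{2S+1−j} ≥ 1 for every j = 1,...,S. -/
open Matrix Polynomial
open scoped ComplexOrder

/-- A quantum covariance matrix: real symmetric positive-definite with `Γ + iΩ ⪰ 0`. -/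
def IsQuantumCovMatrix (S : ℕ) (Γ : Matrix (Fin (2 * S)) (Fin (2 * S)) ℝ) : Prop :=
  Γ.IsSymm ∧ Γ.PosDef ∧
    (Γ.map (fun x => (x : ℂ)) +
      Complex.I • (Omega S).map (fun x => (x : ℂ))).PosSemidef

/-- The diagonal representative of a non-ascending eigenspectrum `λ₁ ≥ … ≥ λ_{2S}`:
its `j`-th `2 × 2` diagonal block is `diag(λ_j, λ_{2S+1-j})` (in `0`-based indexing,
block `b` has diagonal `(λ_b, λ_{2S-1-b})`). -/
def diagRep (S : ℕ) (lam : Fin (2 * S) → ℝ) : Matrix (Fin (2 * S)) (Fin (2 * S)) ℝ :=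
  Matrix.diagonal fun j =>
    if j.val % 2 = 0 then lam ⟨j.val / 2, by have := j.isLt; omega⟩
    else lam ⟨2 * S - 1 - j.val / 2, by have := j.isLt; omega⟩

namespace QCov
variable {S : ℕ}

def rho (k : Fin (2*S)) : Fin (2*S) :=
  if h : k.val % 2 = 0 then ⟨k.val+1, by have := k.isLt; omega⟩
  else ⟨k.val-1, by have := k.isLt; omega⟩

noncomputable def eps (k : Fin (2*S)) : ℝ := if k.val % 2 = 0 then 1 else -1

lemma rho_rho (k : Fin (2*S)) : rho (rho k) = k := by
  unfold rho
  split <;> rename_i h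
  · rw [dif_neg (by simpa using by omega : ¬ (k.val+1) % 2 = 0)]
    · exact Fin.ext (by simp)
  · rw [dif_pos (by have := k.isLt; omega : (k.val-1) % 2 = 0)]
    exact Fin.ext (by have := k.isLt; simp; omega)

lemma eps_rho (k : Fin (2*S)) : eps (rho k) = - eps k := by
  unfold rho eps
  split <;> rename_i h <;> simp only
  · rw [if_neg (by omega : ¬ (k.val+1) % 2 = 0)]
  · rw [if_pos (by have := k.isLt; omega : (k.val-1) % 2 = 0)]
    norm_num

lemma omega_apply (k l : Fin (2*S)) :
    Omega S k l = if l = rho k then eps k else 0 := by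
  unfold Omega rho eps
  by_cases h : k.val % 2 = 0
  · rw [dif_pos h, if_pos h]
    by_cases hl : l = ⟨k.val+1, by have := k.isLt; omega⟩
    · subst hl; simp [Matrix.of_apply, h]
    · rw [if_neg hl]
      have hne : ¬ (k.val + 1 = l.val ∧ k.val % 2 = 0) := by
        intro ⟨h1, _⟩; exact hl (Fin.ext h1.symm)
      simp only [Matrix.of_apply, if_neg hne]
      rw [if_neg]; rintro ⟨h1, h2⟩; omega
  · rw [dif_neg h, if_neg h]
    by_cases hl : l = ⟨k.val-1, by have := k.isLt; omega⟩
    · subst hl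
      simp only [Matrix.of_apply]
      rw [if_neg (by omega), if_pos (by constructor <;> omega)]
      simp
    · rw [if_neg hl]
      have hlv : ¬ (l.val = k.val - 1) := fun hh => hl (Fin.ext hh)
      simp only [Matrix.of_apply]
      rw [if_neg (by omega), if_neg (by rintro ⟨h1,h2⟩; omega)]

lemma omega_mulVec (x : Fin (2*S) → ℝ) (k : Fin (2*S)) :
    (Omega S *ᵥ x) k = eps k * x (rho k) := by
  simp [Matrix.mulVec, dotProduct, omega_apply, ite_mul]

lemma omega_antisymm (k l : Fin (2*S)) : Omega S l k = - Omega S k l := by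
  rw [omega_apply, omega_apply]
  by_cases h : l = rho k
  · subst h
    rw [if_pos (rho_rho k).symm, if_pos rfl, eps_rho]
  · rw [if_neg h, if_neg (fun hh => h (by rw [hh, rho_rho]))]
    simp

/-- `ρ` as a permutation. -/
noncomputable def rhoPerm : Equiv.Perm (Fin (2*S)) :=
  Function.Involutive.toPerm rho rho_rho

@[simp] lemma rhoPerm_apply (k : Fin (2*S)) : (rhoPerm k : Fin (2*S)) = rho k := rfl

lemma eps_sq (k : Fin (2*S)) : eps k * eps k = 1 := by
  unfold eps; split <;> norm_num

lemma omega_omega_mulVec (x : Fin (2*S) → ℝ) :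
    Omega S *ᵥ (Omega S *ᵥ x) = -x := by
  funext k
  rw [omega_mulVec, omega_mulVec, eps_rho, rho_rho]
  simp only [Pi.neg_apply]
  have h := eps_sq k
  linear_combination (-(x k)) * h

lemma omega_dot (x : Fin (2*S) → ℝ) :
    (Omega S *ᵥ x) ⬝ᵥ (Omega S *ᵥ x) = x ⬝ᵥ x := by
  simp only [dotProduct, omega_mulVec]
  have : ∀ k, eps k * x (rho k) * (eps k * x (rho k)) = x (rho k) * x (rho k) := by
    intro k; nlinarith [eps_sq k]
  rw [Finset.sum_congr rfl (fun k _ => this k)]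
  exact Fintype.sum_equiv rhoPerm (fun k => x (rho k) * x (rho k)) (fun k => x k * x k)
    (fun k => rfl)

lemma dot_eq_double_sum (M : Matrix (Fin (2*S)) (Fin (2*S)) ℝ) (u w : Fin (2*S) → ℝ) :
    u ⬝ᵥ (M *ᵥ w) = ∑ k, ∑ l, u k * M k l * w l := by
  simp [dotProduct, Matrix.mulVec, Finset.mul_sum, mul_assoc]

lemma quadform {Γ : Matrix (Fin (2*S)) (Fin (2*S)) ℝ} (hsym : Γ.IsSymm)
    (hpsd : (Γ.map (fun x => (x : ℂ)) +
      Complex.I • (Omega S).map (fun x => (x : ℂ))).PosSemidef)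
    (x y : Fin (2*S) → ℝ) (t : ℝ) :
    0 ≤ x ⬝ᵥ (Γ *ᵥ x) + t^2 * (y ⬝ᵥ (Γ *ᵥ y)) - 2*t*(x ⬝ᵥ (Omega S *ᵥ y)) := by
  classical
  have hG : ∀ k l, Γ l k = Γ k l := fun k l => hsym.apply k l
  set z : Fin (2*S) → ℂ := fun k => (x k : ℂ) + t * Complex.I * y k with hz
  have h0 := hpsd.dotProduct_mulVec_nonneg z
  set f : Fin (2*S) → Fin (2*S) → ℝ := fun k l =>
    x k * Γ k l * x l + t^2*(y k * Γ k l * y l) - t*(x k * Omega S k l * y l)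
      + t*(y k * Omega S k l * x l) with hf
  set g : Fin (2*S) → Fin (2*S) → ℝ := fun k l =>
    t*(x k * Γ k l * y l) - t*(y k * Γ k l * x l) + x k * Omega S k l * x l
      + t^2*(y k * Omega S k l * y l) with hg
  have hL : star z ⬝ᵥ ((Γ.map (fun x => (x : ℂ)) +
      Complex.I • (Omega S).map (fun x => (x : ℂ))) *ᵥ z)
      = ((∑ k, ∑ l, f k l : ℝ) : ℂ) + Complex.I * ((∑ k, ∑ l, g k l : ℝ) : ℂ) := by
    have step1 : star z ⬝ᵥ ((Γ.map (fun x => (x : ℂ)) +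
        Complex.I • (Omega S).map (fun x => (x : ℂ))) *ᵥ z)
        = ∑ k, ∑ l, ((f k l : ℂ) + Complex.I * (g k l : ℂ)) := by
      simp only [dotProduct, Matrix.mulVec, Matrix.add_apply, Matrix.map_apply,
        Matrix.smul_apply, smul_eq_mul, Pi.star_apply, Finset.mul_sum]
      refine Finset.sum_congr rfl fun k _ => Finset.sum_congr rfl fun l _ => ?_
      simp only [hz, hf, hg, Complex.star_def, map_add, _root_.map_mul, Complex.conj_ofReal,
        Complex.conj_I]
      push_cast
      ring_nf
      simp only [Complex.I_sq,
        (by rw [pow_succ, Complex.I_sq]; ring : Complex.I^3 = -Complex.I)]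
      ring
    rw [step1]
    push_cast
    simp [Finset.sum_add_distrib, Finset.mul_sum]
  have hgzero : (∑ k, ∑ l, g k l) = 0 := by
    have swapG : (∑ k, ∑ l, x k * Γ k l * y l) = ∑ k, ∑ l, y k * Γ k l * x l := by
      rw [Finset.sum_comm]
      refine Finset.sum_congr rfl fun k _ => Finset.sum_congr rfl fun l _ => ?_
      rw [hG l k]; ring
    have swapO : ∀ u : Fin (2*S) → ℝ, (∑ k, ∑ l, u k * Omega S k l * u l) = 0 := by
      intro u
      have h1 : (∑ k, ∑ l, u k * Omega S k l * u l)
          = - ∑ k, ∑ l, u k * Omega S k l * u l := by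
        nth_rewrite 1 [Finset.sum_comm]
        rw [← Finset.sum_neg_distrib]
        refine Finset.sum_congr rfl fun k _ => ?_
        rw [← Finset.sum_neg_distrib]
        refine Finset.sum_congr rfl fun l _ => ?_
        rw [omega_antisymm l k]; ring
      linarith
    simp only [hg, Finset.sum_add_distrib, Finset.sum_sub_distrib, ← Finset.mul_sum]
    rw [swapG, swapO x, swapO y]
    ring
  have hfval : (∑ k, ∑ l, f k l)
      = x ⬝ᵥ (Γ *ᵥ x) + t^2 * (y ⬝ᵥ (Γ *ᵥ y)) - 2*t*(x ⬝ᵥ (Omega S *ᵥ y)) := by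
    have swapOxy : (∑ k, ∑ l, y k * Omega S k l * x l)
        = - ∑ k, ∑ l, x k * Omega S k l * y l := by
      rw [Finset.sum_comm, ← Finset.sum_neg_distrib]
      refine Finset.sum_congr rfl fun k _ => ?_
      rw [← Finset.sum_neg_distrib]
      refine Finset.sum_congr rfl fun l _ => ?_
      rw [omega_antisymm l k]; ring
    simp only [hf, Finset.sum_add_distrib, Finset.sum_sub_distrib, ← Finset.mul_sum]
    rw [swapOxy, dot_eq_double_sum, dot_eq_double_sum, dot_eq_double_sum]
    ring
  rw [hL, hgzero] at h0
  simp only [Complex.ofReal_zero, mul_zero, add_zero] at h0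
  rw [hfval] at h0
  exact_mod_cast h0

lemma charpoly_conj {n : Type*} [Fintype n] [DecidableEq n] {R : Type*} [CommRing R]
    (U D V : Matrix n n R) (h1 : U * V = 1) (h2 : V * U = 1) :
    (U * D * V).charpoly = D.charpoly := by
  have hmap1 : U.map C * V.map C = 1 := by
    rw [← Matrix.map_mul, h1]; simp
  have hmap2 : V.map C * U.map C = 1 := by
    rw [← Matrix.map_mul, h2]; simp
  have hcm : charmatrix (U * D * V) = U.map C * charmatrix D * V.map C := by
    unfold charmatrix
    rw [Matrix.mul_sub, Matrix.sub_mul]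
    congr 1
    · rw [mul_assoc, (Matrix.scalar_commute (X : R[X]) (fun r => Commute.all _ _) (V.map C)).eq,
        ← mul_assoc, hmap1, one_mul]
    · simp only [RingHom.mapMatrix_apply, ← Matrix.map_mul]
  rw [Matrix.charpoly, hcm, det_mul, det_mul, mul_comm, ← mul_assoc, ← det_mul, hmap2]
  simp [Matrix.charpoly]

lemma charpoly_eq_prod_eigenvalues {m : ℕ} (A : Matrix (Fin m) (Fin m) ℝ) (hA : A.IsHermitian) :
    A.charpoly = ∏ i, (X - C (hA.eigenvalues i)) := by
  have hspec := hA.spectral_theorem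
  have hU1 : (hA.eigenvectorUnitary : Matrix (Fin m) (Fin m) ℝ) *
      (star hA.eigenvectorUnitary : Matrix (Fin m) (Fin m) ℝ) = 1 :=
    Matrix.mem_unitaryGroup_iff.mp hA.eigenvectorUnitary.2
  have hU2 : (star hA.eigenvectorUnitary : Matrix (Fin m) (Fin m) ℝ) *
      (hA.eigenvectorUnitary : Matrix (Fin m) (Fin m) ℝ) = 1 :=
    Matrix.mem_unitaryGroup_iff'.mp hA.eigenvectorUnitary.2
  calc A.charpoly
      = ((hA.eigenvectorUnitary : Matrix (Fin m) (Fin m) ℝ) *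
          diagonal (RCLike.ofReal ∘ hA.eigenvalues) *
          (star hA.eigenvectorUnitary : Matrix (Fin m) (Fin m) ℝ)).charpoly := by rw [← Unitary.conjStarAlgAut_apply (S := ℝ), ← hspec]
    _ = (diagonal (RCLike.ofReal ∘ hA.eigenvalues)).charpoly := charpoly_conj _ _ _ hU1 hU2
    _ = ∏ i, (X - C (hA.eigenvalues i)) := by
        rw [Matrix.charpoly_of_upperTriangular _ (Matrix.blockTriangular_diagonal _)]
        simp [RCLike.ofReal]

lemma roots_prod_X_sub_C' {n : ℕ} (f : Fin n → ℝ) :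
    (∏ j, (X - C (f j))).roots = Multiset.map f Finset.univ.val := by
  have : (∏ j, (X - C (f j)))
      = (Multiset.map (fun a => X - C a) (Multiset.map f Finset.univ.val)).prod := by
    rw [Multiset.map_map]; rfl
  rw [this, Polynomial.roots_multiset_prod_X_sub_C]

open Finset in
lemma card_filter_comp {n : ℕ} (f : Fin n → ℝ) (p : ℝ → Prop) [DecidablePred p] :
    (univ.filter (fun i => p (f i))).card
      = Multiset.card ((Multiset.map f univ.val).filter p) := by
  rw [Multiset.filter_map, Multiset.card_map, Finset.card, Finset.filter_val]
  rfl

open Finset in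
lemma count_eq {n : ℕ} (f g : Fin n → ℝ)
    (h : Multiset.map f Finset.univ.val = Multiset.map g Finset.univ.val) (c : ℝ) :
    (univ.filter (fun i => f i ≤ c)).card = (univ.filter (fun i => g i ≤ c)).card := by
  classical
  rw [card_filter_comp f (fun a => a ≤ c), card_filter_comp g (fun a => a ≤ c), h]

open Finset in
lemma card_filter_le_ge {n : ℕ} (a : Fin n) :
    (univ.filter (fun i => a ≤ i)).card = n - a.val := by
  rw [show (univ.filter (fun i => a ≤ i)) = Finset.Ici a by ext i; simp]
  rw [Fin.card_Ici]

lemma dot_self_pos {n : ℕ} {w : Fin n → ℝ} (h : w ≠ 0) : 0 < w ⬝ᵥ w := by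
  rcases lt_or_eq_of_le (Finset.sum_nonneg fun i _ => mul_self_nonneg (w i) :
    0 ≤ w ⬝ᵥ w) with h1 | h1
  · exact h1
  · exact absurd (dotProduct_self_eq_zero.mp h1.symm) h

lemma exists_kernel_vec {n : ℕ} (A B : Finset (Fin n)) (T : Matrix (Fin n) (Fin n) ℝ)
    (hcard : Aᶜ.card + Bᶜ.card < n) :
    ∃ w : Fin n → ℝ, w ≠ 0 ∧ (∀ k ∉ A, w k = 0) ∧ (∀ k ∉ B, (T *ᵥ w) k = 0) := by
  classical
  let F : (Fin n → ℝ) →ₗ[ℝ] ((Aᶜ : Finset (Fin n)) → ℝ) × ((Bᶜ : Finset (Fin n)) → ℝ) :=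
    { toFun := fun w => (fun k => w k.1, fun k => (T *ᵥ w) k.1)
      map_add' := by intro u v; ext k <;> simp [Matrix.mulVec_add]
      map_smul' := by intro c u; ext k <;> simp [Matrix.mulVec_smul] }
  have hrank : Module.finrank ℝ (((Aᶜ : Finset (Fin n)) → ℝ) × ((Bᶜ : Finset (Fin n)) → ℝ))
      < Module.finrank ℝ (Fin n → ℝ) := by
    rw [Module.finrank_prod]
    simp only [Module.finrank_pi, Fintype.card_coe]
    simpa using hcard
  have hker := LinearMap.ker_ne_bot_of_finrank_lt (f := F) hrank
  rw [Submodule.ne_bot_iff] at hker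
  obtain ⟨w, hw, hw0⟩ := hker
  refine ⟨w, hw0, fun k hk => ?_, fun k hk => ?_⟩
  · have := congrArg (fun p => p.1 ⟨k, by simpa using hk⟩) (LinearMap.mem_ker.mp hw)
    simpa [F] using this
  · have := congrArg (fun p => p.2 ⟨k, by simpa using hk⟩) (LinearMap.mem_ker.mp hw)
    simpa [F] using this


open Finset in
lemma part2 (S : ℕ) (Γ : Matrix (Fin (2 * S)) (Fin (2 * S)) ℝ)
    (hΓ : IsQuantumCovMatrix S Γ)
    (lam : Fin (2 * S) → ℝ)
    (hmono : ∀ i j : Fin (2 * S), i ≤ j → lam j ≤ lam i)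
    (hchar : Γ.charpoly = ∏ j : Fin (2 * S), (X - C (lam j))) :
    ∀ j : Fin S,
      1 ≤ lam ⟨j.val, by omega⟩ *
            lam ⟨2 * S - 1 - j.val, by omega⟩ := by
  classical
  intro j
  obtain ⟨hsym, hpd, hpsd⟩ := hΓ
  have hH : Γ.IsHermitian := hpd.1
  set μ : Fin (2*S) → ℝ := hH.eigenvalues with hμ
  set U : Matrix (Fin (2*S)) (Fin (2*S)) ℝ := ((hH.eigenvectorUnitary :
      ↥(Matrix.unitaryGroup (Fin (2*S)) ℝ)) : Matrix (Fin (2*S)) (Fin (2*S)) ℝ) with hUdef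
  have hU1 : U * star U = 1 := Matrix.mem_unitaryGroup_iff.mp hH.eigenvectorUnitary.2
  have hU2 : star U * U = 1 := Matrix.mem_unitaryGroup_iff'.mp hH.eigenvectorUnitary.2
  have hspec : Γ = U * diagonal μ * star U := by
    have h := hH.spectral_theorem
    simpa [RCLike.ofReal] using h
  -- multiset equality of eigenvalue lists
  have hmul : Multiset.map lam Finset.univ.val = Multiset.map μ Finset.univ.val := by
    have h1 := roots_prod_X_sub_C' lam
    have h2 := roots_prod_X_sub_C' μ
    rw [← hchar] at h1
    rw [← charpoly_eq_prod_eigenvalues Γ hH] at h2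
    rw [← h1, ← h2]
  have hjlt := j.isLt
  set jfin : Fin (2*S) := ⟨j.val, by omega⟩ with hjfin
  set j'fin : Fin (2*S) := ⟨2*S-1-j.val, by omega⟩ with hj'fin
  set A : Finset (Fin (2*S)) := univ.filter (fun k => μ k ≤ lam jfin) with hA
  set B : Finset (Fin (2*S)) := univ.filter (fun k => μ k ≤ lam j'fin) with hB
  have hcardA : 2*S - j.val ≤ A.card := by
    rw [hA, ← count_eq lam μ hmul]
    refine le_trans ?_ (Finset.card_le_card (s := univ.filter (fun i => jfin ≤ i)) ?_)
    · rw [card_filter_le_ge]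
    · intro i hi
      simp only [Finset.mem_filter, Finset.mem_univ, true_and] at hi ⊢
      exact hmono _ _ hi
  have hcardB : j.val + 1 ≤ B.card := by
    rw [hB, ← count_eq lam μ hmul]
    refine le_trans ?_ (Finset.card_le_card (s := univ.filter (fun i => j'fin ≤ i)) ?_)
    · rw [card_filter_le_ge]; simp only [hj'fin]; omega
    · intro i hi
      simp only [Finset.mem_filter, Finset.mem_univ, true_and] at hi ⊢
      exact hmono _ _ hi
  have hcompl : Aᶜ.card + Bᶜ.card < 2*S := by
    rw [Finset.card_compl, Finset.card_compl, Fintype.card_fin]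
    have h1 : A.card ≤ 2*S := by simpa using Finset.card_le_univ A
    have h2 : B.card ≤ 2*S := by simpa using Finset.card_le_univ B
    omega
  obtain ⟨w, hw0, hwA, hwB⟩ := exists_kernel_vec A B (star U * Omega S * U) hcompl
  set x : Fin (2*S) → ℝ := U *ᵥ w with hx
  set y : Fin (2*S) → ℝ := Omega S *ᵥ x with hy
  have hxw : star U *ᵥ x = w := by
    rw [hx, Matrix.mulVec_mulVec, hU2, Matrix.one_mulVec]
  have hdotU : ∀ u v : Fin (2*S) → ℝ, u ⬝ᵥ (U *ᵥ v) = (star U *ᵥ u) ⬝ᵥ v := by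
    intro u v
    rw [Matrix.dotProduct_mulVec, Matrix.star_eq_conjTranspose,
      Matrix.conjTranspose_eq_transpose_of_trivial, Matrix.mulVec_transpose]
  have hqu : ∀ u : Fin (2*S) → ℝ,
      u ⬝ᵥ (Γ *ᵥ u) = ∑ k, μ k * ((star U *ᵥ u) k)^2 := by
    intro u
    conv_lhs => rw [hspec]
    rw [← Matrix.mulVec_mulVec, ← Matrix.mulVec_mulVec, hdotU]
    simp only [dotProduct, Matrix.mulVec_diagonal]
    exact Finset.sum_congr rfl fun k _ => by ring
  have hnu : ∀ u : Fin (2*S) → ℝ,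
      u ⬝ᵥ u = (star U *ᵥ u) ⬝ᵥ (star U *ᵥ u) := by
    intro u
    conv_lhs => rw [← Matrix.one_mulVec u, ← hU1, ← Matrix.mulVec_mulVec, hdotU]
    rw [Matrix.mulVec_mulVec, hU2, Matrix.one_mulVec]
  set s : ℝ := w ⬝ᵥ w with hs
  have hs_pos : 0 < s := dot_self_pos hw0
  have hx0 : x ≠ 0 := by
    intro h
    apply hw0
    rw [← hxw, h, Matrix.mulVec_zero]
  have hy0 : y ≠ 0 := by
    intro h
    apply hx0
    have := omega_omega_mulVec x
    rw [← hy, h, Matrix.mulVec_zero] at this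
    simpa using this.symm
  have hxx : x ⬝ᵥ x = s := by rw [hnu x, hxw]
  have hyy : y ⬝ᵥ y = s := by rw [hy, omega_dot, hxx]
  set a : ℝ := x ⬝ᵥ (Γ *ᵥ x) with ha
  set b : ℝ := y ⬝ᵥ (Γ *ᵥ y) with hb
  have ha_pos : 0 < a := by
    have := hpd.dotProduct_mulVec_pos hx0
    simpa [ha, star_trivial] using this
  have hb_pos : 0 < b := by
    have := hpd.dotProduct_mulVec_pos hy0
    simpa [hb, star_trivial] using this
  have ha_le : a ≤ lam jfin * s := by
    rw [ha, hqu x, hxw]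
    have hsum : s = ∑ k, (w k)^2 := by
      rw [hs]; exact Finset.sum_congr rfl fun k _ => by ring
    rw [hsum, Finset.mul_sum]
    refine Finset.sum_le_sum fun k _ => ?_
    by_cases hk : w k = 0
    · simp [hk]
    · have hkA : k ∈ A := by
        by_contra hc
        exact hk (hwA k hc)
      rw [hA, Finset.mem_filter] at hkA
      exact mul_le_mul_of_nonneg_right hkA.2 (sq_nonneg _)
  have hTw : star U *ᵥ y = (star U * Omega S * U) *ᵥ w := by
    rw [hy, hx, Matrix.mulVec_mulVec, Matrix.mulVec_mulVec, mul_assoc]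
  have hb_le : b ≤ lam j'fin * s := by
    rw [hb, hqu y]
    have hsum : s = ∑ k, ((star U *ᵥ y) k)^2 := by
      have := hnu y
      rw [hyy] at this
      rw [this]
      exact Finset.sum_congr rfl fun k _ => by ring
    rw [hsum, Finset.mul_sum]
    refine Finset.sum_le_sum fun k _ => ?_
    by_cases hk : (star U *ᵥ y) k = 0
    · simp [hk]
    · have hkB : k ∈ B := by
        by_contra hc
        exact hk (by rw [hTw]; exact hwB k hc)
      rw [hB, Finset.mem_filter] at hkB
      exact mul_le_mul_of_nonneg_right hkB.2 (sq_nonneg _)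
  have hcross : x ⬝ᵥ (Omega S *ᵥ y) = -s := by
    rw [hy, omega_omega_mulVec, dotProduct_neg, hxx]
  have hquad := quadform hsym hpsd x y (-(s/b))
  rw [hcross, ← ha, ← hb] at hquad
  have hb_ne : b ≠ 0 := ne_of_gt hb_pos
  have hkey : s^2 ≤ a * b := by
    have he : (-(s/b))^2 * b - 2*(-(s/b))*(-s) = -(s^2/b) := by
      field_simp
      ring
    have h2 : 0 ≤ a - s^2/b := by linarith [hquad, he]
    have h3 : s^2/b ≤ a := by linarith
    calc s^2 = (s^2/b) * b := by field_simp
    _ ≤ a * b := mul_le_mul_of_nonneg_right h3 hb_pos.le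
  have hLs : (0:ℝ) ≤ lam jfin * s := le_trans ha_pos.le ha_le
  have hab : a * b ≤ (lam jfin * s) * (lam j'fin * s) :=
    mul_le_mul ha_le hb_le hb_pos.le hLs
  have hgoal : 1 ≤ lam jfin * lam j'fin := by
    nlinarith [hkey, hab, hs_pos, mul_pos hs_pos hs_pos]
  exact hgoal


lemma pair_ineq (d1 d2 n1 n2 m : ℝ) (hd1 : 0 < d1) (hd2 : 0 < d2) (hdd : 1 ≤ d1*d2)
    (hn1 : 0 ≤ n1) (hn2 : 0 ≤ n2) (hm : m^2 ≤ n1*n2) : 2*m ≤ d1*n1 + d2*n2 := by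
  have hS : 0 ≤ d1*n1 + d2*n2 := by positivity
  nlinarith [sq_nonneg (d1*n1 - d2*n2), mul_nonneg hn1 hn2, mul_pos hd1 hd2,
    mul_nonneg (mul_nonneg hd1.le hd2.le) (mul_nonneg hn1 hn2)]

lemma omega_diag_zero (k : Fin (2*S)) : Omega S k k = 0 := by
  rw [omega_apply, if_neg]
  intro h
  have h2 := congrArg Fin.val h
  unfold rho at h2
  split at h2 <;> simp at h2 <;> omega

lemma omegaC_mulVec (z : Fin (2*S) → ℂ) (k : Fin (2*S)) :
    ((Omega S).map (fun x => (x:ℂ)) *ᵥ z) k = (eps k : ℂ) * z (rho k) := by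
  simp [Matrix.mulVec, dotProduct, Matrix.map_apply, omega_apply, ite_mul,
    apply_ite (fun r : ℝ => (r:ℂ))]

lemma diag_psd (d : Fin (2*S) → ℝ) (hpos : ∀ k, 0 < d k) (hpair : ∀ k, 1 ≤ d k * d (rho k)) :
    ((Matrix.diagonal d).map (fun x => (x:ℂ)) +
      Complex.I • (Omega S).map (fun x => (x:ℂ))).PosSemidef := by
  refine Matrix.PosSemidef.of_dotProduct_mulVec_nonneg ?_ ?_
  · -- Hermitian
    ext k l
    simp only [Matrix.conjTranspose_apply, Matrix.add_apply, Matrix.map_apply,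
      Matrix.smul_apply, smul_eq_mul, star_add, star_mul', Complex.star_def, Complex.conj_I,
      Complex.conj_ofReal]
    by_cases h : k = l
    · subst h
      simp [omega_diag_zero]
    · rw [Matrix.diagonal_apply_ne d h, Matrix.diagonal_apply_ne d (Ne.symm h),
        omega_antisymm k l]
      push_cast
      ring
  · intro z
    have hmv : ∀ k, ((((Matrix.diagonal d).map (fun x => (x:ℂ)) +
        Complex.I • (Omega S).map (fun x => (x:ℂ)))) *ᵥ z) k
        = (d k : ℂ) * z k + Complex.I * ((eps k : ℂ) * z (rho k)) := by
      intro k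
      rw [Matrix.add_mulVec, Pi.add_apply, Matrix.smul_mulVec, Pi.smul_apply,
        smul_eq_mul, omegaC_mulVec]
      congr 1
      rw [Matrix.diagonal_map (by simp), Matrix.mulVec_diagonal]
    have hdot : star z ⬝ᵥ ((((Matrix.diagonal d).map (fun x => (x:ℂ)) +
        Complex.I • (Omega S).map (fun x => (x:ℂ)))) *ᵥ z)
        = ((∑ k, d k * Complex.normSq (z k) : ℝ) : ℂ)
          + Complex.I * ∑ k, (eps k : ℂ) * ((starRingEnd ℂ) (z k) * z (rho k)) := by
      simp only [dotProduct, Pi.star_apply, Complex.star_def, hmv]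
      push_cast
      rw [Finset.mul_sum, ← Finset.sum_add_distrib]
      refine Finset.sum_congr rfl fun k _ => ?_
      rw [← Complex.mul_conj]
      ring
    set wsum : ℂ := ∑ k, (eps k : ℂ) * ((starRingEnd ℂ) (z k) * z (rho k)) with hwsum
    have hconj : (starRingEnd ℂ) wsum = -wsum := by
      rw [hwsum, map_sum, ← Finset.sum_neg_distrib]
      refine (Fintype.sum_equiv rhoPerm _ _ fun k => ?_)
      simp only [rhoPerm_apply, _root_.map_mul, Complex.conj_conj, Complex.conj_ofReal,
        rho_rho, eps_rho]
      push_cast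
      ring
    have hre : wsum.re = 0 := by
      have h3 := congrArg Complex.re hconj
      simp only [Complex.conj_re, Complex.neg_re] at h3
      linarith
    have hIw : Complex.I * wsum = ((-wsum.im : ℝ) : ℂ) := by
      apply Complex.ext <;> simp [Complex.mul_re, Complex.mul_im, hre]
    rw [hdot, hIw, ← Complex.ofReal_add, ← Complex.ofReal_zero, Complex.real_le_real]
    set T : Fin (2*S) → ℝ := fun k => d k * Complex.normSq (z k)
      - eps k * ((starRingEnd ℂ) (z k) * z (rho k)).im with hT
    have hwim : wsum.im = ∑ k, eps k * ((starRingEnd ℂ) (z k) * z (rho k)).im := by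
      rw [hwsum, Complex.im_sum]
      exact Finset.sum_congr rfl fun k _ => by simp [Complex.mul_im]
    have hsplit : (∑ k, d k * Complex.normSq (z k)) + -wsum.im = ∑ k, T k := by
      rw [hT, Finset.sum_sub_distrib, hwim]
      ring
    rw [hsplit]
    have hTT : ∀ k, 0 ≤ T k + T (rho k) := by
      intro k
      have him2 : (eps k * ((starRingEnd ℂ) (z k) * z (rho k)).im)^2
          ≤ Complex.normSq (z k) * Complex.normSq (z (rho k)) := by
        have h1 : ((starRingEnd ℂ) (z k) * z (rho k)).im ^2
            ≤ Complex.normSq ((starRingEnd ℂ) (z k) * z (rho k)) := by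
          rw [Complex.normSq_apply]
          nlinarith [sq_nonneg (((starRingEnd ℂ) (z k) * z (rho k)).re)]
        have h2 : Complex.normSq ((starRingEnd ℂ) (z k) * z (rho k))
            = Complex.normSq (z k) * Complex.normSq (z (rho k)) := by
          rw [Complex.normSq_mul, Complex.normSq_conj]
        have h3 := eps_sq k
        calc (eps k * ((starRingEnd ℂ) (z k) * z (rho k)).im)^2
            = (eps k * eps k) * ((starRingEnd ℂ) (z k) * z (rho k)).im^2 := by ring
          _ = ((starRingEnd ℂ) (z k) * z (rho k)).im^2 := by rw [h3]; ring
          _ ≤ _ := h1.trans_eq h2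
      have hT2 : T k + T (rho k)
          = d k * Complex.normSq (z k) + d (rho k) * Complex.normSq (z (rho k))
            - 2 * (eps k * ((starRingEnd ℂ) (z k) * z (rho k)).im) := by
        rw [hT]
        simp only [rho_rho, eps_rho]
        have : ((starRingEnd ℂ) (z (rho k)) * z k).im
            = - ((starRingEnd ℂ) (z k) * z (rho k)).im := by
          rw [show (starRingEnd ℂ) (z (rho k)) * z k
              = (starRingEnd ℂ) ((starRingEnd ℂ) (z k) * z (rho k)) from by
            rw [_root_.map_mul, Complex.conj_conj]; ring]
          rw [Complex.conj_im]
        rw [this]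
        ring
      rw [hT2]
      have := pair_ineq (d k) (d (rho k)) (Complex.normSq (z k)) (Complex.normSq (z (rho k)))
        (eps k * ((starRingEnd ℂ) (z k) * z (rho k)).im) (hpos k) (hpos (rho k)) (hpair k)
        (Complex.normSq_nonneg _) (Complex.normSq_nonneg _) him2
      linarith
    have hdouble : (∑ k, T k) + (∑ k, T k) = ∑ k, (T k + T (rho k)) := by
      nth_rewrite 2 [show (∑ k, T k) = ∑ k, T (rho k) from
        Fintype.sum_equiv rhoPerm T (fun k => T (rho k)) (fun k => by simp [rho_rho])]
      rw [Finset.sum_add_distrib]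
    have hnn : 0 ≤ ∑ k, (T k + T (rho k)) := Finset.sum_nonneg fun k _ => hTT k
    linarith

open Finset in
lemma lam_pos (S : ℕ) (Γ : Matrix (Fin (2 * S)) (Fin (2 * S)) ℝ)
    (hΓ : IsQuantumCovMatrix S Γ)
    (lam : Fin (2 * S) → ℝ)
    (hchar : Γ.charpoly = ∏ j : Fin (2 * S), (X - C (lam j))) :
    ∀ i, 0 < lam i := by
  classical
  intro i
  have hpd : Γ.PosDef := hΓ.2.1
  have hH : Γ.IsHermitian := hpd.1
  have hmul : Multiset.map lam Finset.univ.val = Multiset.map hH.eigenvalues Finset.univ.val := by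
    have h1 := roots_prod_X_sub_C' lam
    have h2 := roots_prod_X_sub_C' hH.eigenvalues
    rw [← hchar] at h1
    rw [← charpoly_eq_prod_eigenvalues Γ hH] at h2
    rw [← h1, ← h2]
  have hmem : lam i ∈ Multiset.map hH.eigenvalues Finset.univ.val := by
    rw [← hmul]
    exact Multiset.mem_map_of_mem lam (Finset.mem_univ i)
  obtain ⟨k, _, hk⟩ := Multiset.mem_map.mp hmem
  rw [← hk]
  exact hpd.eigenvalues_pos k

end QCov


/-- If `Γ` is a quantum covariance matrix with eigenvalues
`λ₁ ≥ … ≥ λ_{2S}` (non-ascending), then the diagonal representative `D_Λ`, whose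
`j`-th `2 × 2` block is `diag(λ_j, λ_{2S+1-j})`, is also a quantum covariance
matrix; equivalently, `λ_j · λ_{2S+1-j} ≥ 1` for every `j`. -/
theorem diagonal_representative_is_quantum_cov (S : ℕ)
    (Γ : Matrix (Fin (2 * S)) (Fin (2 * S)) ℝ)
    (hΓ : IsQuantumCovMatrix S Γ)
    (lam : Fin (2 * S) → ℝ)
    (hmono : ∀ i j : Fin (2 * S), i ≤ j → lam j ≤ lam i)
    (hchar : Γ.charpoly = ∏ j : Fin (2 * S), (X - C (lam j))) :
    IsQuantumCovMatrix S (diagRep S lam) ∧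
    ∀ j : Fin S,
      1 ≤ lam ⟨j.val, by have := j.isLt; omega⟩ *
            lam ⟨2 * S - 1 - j.val, by have := j.isLt; omega⟩ := by
  have hp2 := QCov.part2 S Γ hΓ lam hmono hchar
  have hlampos := QCov.lam_pos S Γ hΓ lam hchar
  set d : Fin (2 * S) → ℝ := fun j =>
    if j.val % 2 = 0 then lam ⟨j.val / 2, by have := j.isLt; omega⟩
    else lam ⟨2 * S - 1 - j.val / 2, by have := j.isLt; omega⟩ with hd
  have hdiag : diagRep S lam = Matrix.diagonal d := rfl
  have hd_pos : ∀ k, 0 < d k := by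
    intro k
    rw [hd]
    dsimp only
    split <;> exact hlampos _
  have key : ∀ (m : ℕ) (hm : m < S),
      1 ≤ lam ⟨m, by omega⟩ * lam ⟨2*S-1-m, by omega⟩ := fun m hm => hp2 ⟨m, hm⟩
  have hd_pair : ∀ k, 1 ≤ d k * d (QCov.rho k) := by
    intro k
    have hklt := k.isLt
    by_cases h : k.val % 2 = 0
    · have hval : (QCov.rho k).val = k.val + 1 := by unfold QCov.rho; rw [dif_pos h]
      have e1 : d k = lam ⟨k.val / 2, by omega⟩ := by rw [hd]; exact if_pos h
      have e2 : d (QCov.rho k) = lam ⟨2*S-1-k.val/2, by omega⟩ := by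
        rw [hd]
        dsimp only
        rw [if_neg (by omega : ¬ (QCov.rho k).val % 2 = 0)]
        congr 1
        exact Fin.ext (by simp only [hval]; omega)
      rw [e1, e2]
      exact key (k.val / 2) (by omega)
    · have hval : (QCov.rho k).val = k.val - 1 := by unfold QCov.rho; rw [dif_neg h]
      have e1 : d k = lam ⟨2*S-1-k.val/2, by omega⟩ := by rw [hd]; exact if_neg h
      have e2 : d (QCov.rho k) = lam ⟨k.val / 2, by omega⟩ := by
        rw [hd]
        dsimp only
        rw [if_pos (by omega : (QCov.rho k).val % 2 = 0)]
        congr 1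
        exact Fin.ext (by simp only [hval]; omega)
      rw [e1, e2, mul_comm]
      exact key (k.val / 2) (by omega)
  refine ⟨⟨?_, ?_, ?_⟩, hp2⟩
  · rw [hdiag]
    exact Matrix.isSymm_diagonal d
  · rw [hdiag]
    exact Matrix.posDef_diagonal_iff.mpr hd_pos
  · rw [hdiag]
    exact QCov.diag_psd d hd_pos hd_pair
end

section
/- Let S = 2 and let D_Λ = diag(ν₁, ν₁, ν₂e^{2r₂}, ν₂e^{−2r₂}) with ν₁ > 1, ν₂ > 1, r₂ > 0, and ν₂e^{2r₂} = ν₁. Then every quantum covariance matrix Γ whose multiset of eigenvalues equals {ν₁, ν₁, ν₂e^{2r₂}, ν₂e^{−2r₂}} satisfies Γ = Wᵀ D_Λ W for some 4×4 real orthogonal symplectic matrix W. -/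
open Matrix Polynomial
open scoped ComplexOrder

/-- The symplectic form on `2` modes in the ordering `(q₁,p₁,q₂,p₂)`. -/
def Omega4 : Matrix (Fin 4) (Fin 4) ℝ :=
  !![0, 1, 0, 0; -1, 0, 0, 0; 0, 0, 0, 1; 0, 0, -1, 0]

/-- The diagonal of `D_Λ = diag(ν₁, ν₁, ν₂e^{2r₂}, ν₂e^{-2r₂})`. -/
noncomputable def d14 (ν₁ ν₂ r₂ : ℝ) : Fin 4 → ℝ :=
  ![ν₁, ν₁, ν₂ * Real.exp (2 * r₂), ν₂ * Real.exp (-(2 * r₂))]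

lemma my_eval_charpoly {n : Type*} [Fintype n] [DecidableEq n]
    (M : Matrix n n ℝ) (t : ℝ) : M.charpoly.eval t = (t • (1 : Matrix n n ℝ) - M).det := by
  rw [Matrix.charpoly, ← Polynomial.coe_evalRingHom, RingHom.map_det]
  congr 1
  ext i j
  by_cases h : i = j <;>
    simp [charmatrix_apply, Matrix.one_apply, Matrix.diagonal_apply, Matrix.smul_apply, h]

set_option maxHeartbeats 1000000 in
lemma my_endgame (ν₁ μ : ℝ) (Γ : Matrix (Fin 4) (Fin 4) ℝ)
    (v : Fin 4 → ℝ)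
    (hvnorm : v 0 * v 0 + v 1 * v 1 + v 2 * v 2 + v 3 * v 3 = 1)
    (hG : ∀ i j, Γ i j = ν₁ * (if i = j then (1:ℝ) else 0) + (μ - ν₁) * (v i * v j)) :
    ∃ W : Matrix (Fin 4) (Fin 4) ℝ,
      Wᵀ * W = 1 ∧ Wᵀ * Omega4 * W = Omega4 ∧
      Γ = Wᵀ * Matrix.diagonal ![ν₁, ν₁, ν₁, μ] * W := by
  refine ⟨!![-(v 2), v 3, v 0, -(v 1); -(v 3), -(v 2), v 1, v 0;
      v 1, -(v 0), v 3, -(v 2); v 0, v 1, v 2, v 3], ?_, ?_, ?_⟩ <;>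
    rw [show (!![-(v 2), v 3, v 0, -(v 1); -(v 3), -(v 2), v 1, v 0;
        v 1, -(v 0), v 3, -(v 2); v 0, v 1, v 2, v 3])ᵀ
        = !![-(v 2), -(v 3), v 1, v 0; v 3, -(v 2), -(v 0), v 1;
        v 0, v 1, v 3, v 2; -(v 1), v 0, -(v 2), v 3] from by
      ext i j; fin_cases i <;> fin_cases j <;> rfl]
  · ext i j
    fin_cases i <;> fin_cases j <;>
      simp [Matrix.mul_apply, Fin.sum_univ_four, Matrix.one_apply] <;>
      first
        | ring1
        | linear_combination hvnorm
        | linear_combination -hvnorm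
  · ext i j
    fin_cases i <;> fin_cases j <;>
      simp [Omega4, Matrix.mul_apply, Fin.sum_univ_four, Matrix.vecHead, Matrix.vecTail] <;>
      first
        | ring1
        | linear_combination hvnorm
        | linear_combination -hvnorm
  · ext i j
    rw [hG i j]
    fin_cases i <;> fin_cases j <;>
      simp [Matrix.mul_apply, Matrix.diagonal_apply, Fin.sum_univ_four, Matrix.vecMul,
        dotProduct, Matrix.vecHead, Matrix.vecTail] <;>
      first
        | ring1
        | linear_combination hvnorm
        | linear_combination -hvnorm
        | linear_combination ν₁ * hvnorm
        | linear_combination -ν₁ * hvnorm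
        | linear_combination μ * hvnorm
        | linear_combination -μ * hvnorm
        | linear_combination (ν₁ - μ) * hvnorm
        | linear_combination (μ - ν₁) * hvnorm

/-- For `S = 2` and `D_Λ = diag(ν₁, ν₁, ν₂e^{2r₂}, ν₂e^{-2r₂})`
with `ν₁ > 1`, `ν₂ > 1`, `r₂ > 0` and `ν₂e^{2r₂} = ν₁`, every quantum covariance
matrix with eigenvalue multiset `{ν₁, ν₁, ν₂e^{2r₂}, ν₂e^{-2r₂}}` is an orthogonal
symplectic transform of `D_Λ`. -/
theorem two_mode_degenerate_example (ν₁ ν₂ r₂ : ℝ)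
    (h1 : 1 < ν₁) (h2 : 1 < ν₂) (hr : 0 < r₂)
    (heq : ν₂ * Real.exp (2 * r₂) = ν₁)
    (Γ : Matrix (Fin 4) (Fin 4) ℝ)
    (hsymm : Γ.IsSymm) (hpos : Γ.PosDef)
    (hunc : (Γ.map (fun x => (x : ℂ)) +
      Complex.I • Omega4.map (fun x => (x : ℂ))).PosSemidef)
    (hchar : Γ.charpoly = ∏ j : Fin 4, (X - C (d14 ν₁ ν₂ r₂ j))) :
    ∃ W : Matrix (Fin 4) (Fin 4) ℝ,
      Wᵀ * W = 1 ∧ Wᵀ * Omega4 * W = Omega4 ∧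
      Γ = Wᵀ * Matrix.diagonal (d14 ν₁ ν₂ r₂) * W := by
  set μ := ν₂ * Real.exp (-(2 * r₂)) with hμ
  have hμlt : μ < ν₁ := by
    rw [← heq, hμ]
    have h3 : Real.exp (-(2 * r₂)) < Real.exp (2 * r₂) := Real.exp_lt_exp.mpr (by linarith)
    nlinarith [Real.exp_pos (2*r₂)]
  have hd : d14 ν₁ ν₂ r₂ = ![ν₁, ν₁, ν₁, μ] := by
    funext k; fin_cases k <;> simp [d14, heq, hμ]
  have hΓ : Γ.IsHermitian := by
    rw [Matrix.IsHermitian, Matrix.conjTranspose_eq_transpose_of_trivial]; exact hsymm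
  set V : Matrix (Fin 4) (Fin 4) ℝ := (hΓ.eigenvectorUnitary : Matrix (Fin 4) (Fin 4) ℝ) with hV
  set e : Fin 4 → ℝ := hΓ.eigenvalues with he
  have hspec : Γ = V * Matrix.diagonal e * Vᵀ := by
    have := hΓ.spectral_theorem
    simpa [← Matrix.conjTranspose_eq_transpose_of_trivial, Matrix.star_eq_conjTranspose] using this
  have hVV : V * Vᵀ = 1 := by
    have := (Matrix.mem_unitaryGroup_iff).mp hΓ.eigenvectorUnitary.2
    simpa [← Matrix.conjTranspose_eq_transpose_of_trivial, Matrix.star_eq_conjTranspose] using this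
  have hVtV : Vᵀ * V = 1 := by
    have := (Matrix.mem_unitaryGroup_iff').mp hΓ.eigenvectorUnitary.2
    simpa [← Matrix.conjTranspose_eq_transpose_of_trivial, Matrix.star_eq_conjTranspose] using this
  -- each eigenvalue is ν₁ or μ
  have hmem : ∀ i, e i = ν₁ ∨ e i = μ := by
    intro i
    have hdet : (e i • (1 : Matrix (Fin 4) (Fin 4) ℝ) - Γ).det = 0 := by
      have hrw : e i • (1 : Matrix (Fin 4) (Fin 4) ℝ) - Γ
          = V * (Matrix.diagonal (fun j => e i - e j)) * Vᵀ := by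
        have hdiag : Matrix.diagonal (fun j => e i - e j)
            = e i • (1 : Matrix (Fin 4) (Fin 4) ℝ) - Matrix.diagonal e := by
          ext a b
          by_cases h : a = b <;> simp [Matrix.diagonal_apply, Matrix.one_apply, h]
        rw [hdiag, Matrix.mul_sub, Matrix.sub_mul, mul_smul_comm, Matrix.mul_one,
          smul_mul_assoc, hVV, ← hspec]
      rw [hrw, Matrix.det_mul, Matrix.det_mul, Matrix.det_diagonal]
      have : ∏ j, (e i - e j) = 0 :=
        Finset.prod_eq_zero (Finset.mem_univ i) (by simp)
      rw [this, mul_zero, zero_mul]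
    have h2' := my_eval_charpoly Γ (e i)
    rw [hchar, hdet] at h2'
    simp only [eval_prod, eval_sub, eval_X, eval_C, hd] at h2'
    rcases Finset.prod_eq_zero_iff.mp h2' with ⟨j, -, hj⟩
    fin_cases j <;> simp at hj <;>
      [exact Or.inl (by linarith); exact Or.inl (by linarith);
       exact Or.inl (by linarith); exact Or.inr (by linarith)]
  -- trace
  have t4 : Γ.trace = e 0 + e 1 + e 2 + e 3 := by
    rw [hspec, Matrix.trace_mul_cycle, hVtV, Matrix.one_mul, Matrix.trace_diagonal,
      Fin.sum_univ_four]
  have t2' : (∏ j : Fin 4, (X - C (d14 ν₁ ν₂ r₂ j))).coeff 3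
      = -∑ j : Fin 4, d14 ν₁ ν₂ r₂ j := by
    have := Polynomial.prod_X_sub_C_coeff_card_pred (Finset.univ : Finset (Fin 4))
      (d14 ν₁ ν₂ r₂) (by simp)
    simpa using this
  have t5 : ∑ j : Fin 4, d14 ν₁ ν₂ r₂ j = ν₁ + ν₁ + ν₁ + μ := by
    rw [hd, Fin.sum_univ_four]; simp
  have htr : e 0 + e 1 + e 2 + e 3 = ν₁ + ν₁ + ν₁ + μ := by
    have t1 := Matrix.trace_eq_neg_charpoly_coeff Γ
    rw [hchar] at t1
    simp only [Fintype.card_fin] at t1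
    rw [show (4 - 1 : ℕ) = 3 from rfl, t2', t5, neg_neg, t4] at t1
    linarith
  have hcount : ∃ i₀ : Fin 4, e i₀ = μ ∧ ∀ j, j ≠ i₀ → e j = ν₁ := by
    rcases hmem 0 with h0 | h0 <;> rcases hmem 1 with hh1 | hh1 <;>
      rcases hmem 2 with hh2 | hh2 <;> rcases hmem 3 with hh3 | hh3 <;>
      first
        | (exfalso; linarith)
        | (exact ⟨0, h0, by intro j hj; fin_cases j <;>
            first | exact absurd rfl hj | exact h0 | exact hh1 | exact hh2 | exact hh3⟩)
        | (exact ⟨1, hh1, by intro j hj; fin_cases j <;>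
            first | exact absurd rfl hj | exact h0 | exact hh1 | exact hh2 | exact hh3⟩)
        | (exact ⟨2, hh2, by intro j hj; fin_cases j <;>
            first | exact absurd rfl hj | exact h0 | exact hh1 | exact hh2 | exact hh3⟩)
        | (exact ⟨3, hh3, by intro j hj; fin_cases j <;>
            first | exact absurd rfl hj | exact h0 | exact hh1 | exact hh2 | exact hh3⟩)
  obtain ⟨i₀, hi₀, hrest⟩ := hcount
  set v : Fin 4 → ℝ := fun k => V k i₀ with hv
  have hvnorm : v 0 * v 0 + v 1 * v 1 + v 2 * v 2 + v 3 * v 3 = 1 := by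
    have h := congrFun (congrFun hVtV i₀) i₀
    simpa [Matrix.mul_apply, Matrix.one_apply, Fin.sum_univ_four, hv] using h
  have hG : ∀ i j, Γ i j = ν₁ * (if i = j then (1:ℝ) else 0) + (μ - ν₁) * (v i * v j) := by
    intro i j
    have hentry : Γ i j = ∑ l, V i l * e l * V j l := by
      rw [hspec, Matrix.mul_apply]
      refine Finset.sum_congr rfl fun l _ => ?_
      rw [Matrix.mul_diagonal, Matrix.transpose_apply]
    have hsplit : ∀ l, V i l * e l * V j l
        = ν₁ * (V i l * V j l) + (if l = i₀ then (μ - ν₁) * (v i * v j) else 0) := by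
      intro l
      by_cases hl : l = i₀
      · subst hl; rw [hi₀]; simp [hv]; ring
      · rw [hrest l hl]; simp [hl]; ring
    have hsum : ∑ l, V i l * e l * V j l
        = ν₁ * (∑ l, V i l * V j l) + (μ - ν₁) * (v i * v j) := by
      calc ∑ l, V i l * e l * V j l
          = ∑ l, (ν₁ * (V i l * V j l) + (if l = i₀ then (μ - ν₁) * (v i * v j) else 0)) :=
            Finset.sum_congr rfl fun l _ => hsplit l
        _ = (∑ l, ν₁ * (V i l * V j l))
            + ∑ l, (if l = i₀ then (μ - ν₁) * (v i * v j) else 0) := Finset.sum_add_distrib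
        _ = ν₁ * (∑ l, V i l * V j l) + (μ - ν₁) * (v i * v j) := by
            rw [← Finset.mul_sum, Finset.sum_ite_eq' Finset.univ i₀]
            simp
    have hid : (∑ l, V i l * V j l) = if i = j then (1:ℝ) else 0 := by
      have h := congrFun (congrFun hVV i) j
      simpa [Matrix.mul_apply, Matrix.one_apply] using h
    rw [hentry, hsum, hid]
  rw [hd]
  exact my_endgame ν₁ μ Γ v hvnorm hG
end

section
/- Let D be the 2S×2S diagonal matrix diag(c, 1, 1, ..., 1) with c > 0 (a single entry c in position (1,1) and all other diagonal entries 1). Then for every 2S×2S real orthogonal matrix O there exists a 2S×2S real orthogonal symplectic matrix W such that OᵀDO = WᵀDW. In particular, every orthogonal non-symplectic transform of D is trivial: any quantum covariance matrix with the same eigenvalue multiset as D obtained by an orthogonal conjugation of D is already an orthogonal symplectic transform of D. -/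
open Matrix Polynomial
open scoped ComplexOrder

variable {n : ℕ}

lemma vmv_mul_vmv (a b c d : Fin n → ℝ) :
    vecMulVec a b * vecMulVec c d = (b ⬝ᵥ c) • vecMulVec a d := by
  ext i j
  simp only [mul_apply, vecMulVec_apply, Matrix.smul_apply, smul_eq_mul, dotProduct]
  rw [Finset.sum_mul]
  exact Finset.sum_congr rfl fun k _ => by ring

lemma mul_vmv (M : Matrix (Fin n) (Fin n) ℝ) (a b : Fin n → ℝ) :
    M * vecMulVec a b = vecMulVec (M *ᵥ a) b := by
  ext i j
  simp only [mul_apply, vecMulVec_apply, mulVec, dotProduct]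
  rw [Finset.sum_mul]
  exact Finset.sum_congr rfl fun k _ => by ring

lemma vmv_mul (M : Matrix (Fin n) (Fin n) ℝ) (a b : Fin n → ℝ) :
    vecMulVec a b * M = vecMulVec a (Mᵀ *ᵥ b) := by
  ext i j
  simp only [mul_apply, vecMulVec_apply, mulVec, dotProduct, transpose_apply]
  rw [Finset.mul_sum]
  exact Finset.sum_congr rfl fun k _ => by ring

lemma vmv_transpose (a b : Fin n → ℝ) : (vecMulVec a b)ᵀ = vecMulVec b a := by
  ext i j; simp [vecMulVec_apply, mul_comm]

lemma vmv_mulVec (a b x : Fin n → ℝ) : vecMulVec a b *ᵥ x = (b ⬝ᵥ x) • a := by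
  ext i
  simp only [mulVec, dotProduct, vecMulVec_apply, Pi.smul_apply, smul_eq_mul]
  rw [Finset.sum_mul]
  exact Finset.sum_congr rfl fun k _ => by ring

lemma omega_transpose (S : ℕ) : (Omega S)ᵀ = - Omega S := by
  ext i j
  simp only [Omega, transpose_apply, of_apply, Matrix.neg_apply]
  split_ifs with h1 h2 <;> try norm_num
  all_goals (exfalso; omega)

lemma omega_mul_omega (S : ℕ) : Omega S * Omega S = -1 := by
  ext i j
  rw [mul_apply]
  have hone : (-1 : Matrix (Fin (2*S)) (Fin (2*S)) ℝ) i j = if i = j then -1 else 0 := by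
    simp only [Matrix.neg_apply, one_apply]; split_ifs <;> norm_num
  rw [hone]
  rcases Nat.even_or_odd i.val with hi | hi
  · have hi2 : i.val % 2 = 0 := Nat.even_iff.mp hi
    have hlt : i.val + 1 < 2 * S := by omega
    have hi2S := i.isLt
    set i' : Fin (2 * S) := ⟨i.val + 1, hlt⟩ with hi'
    have hi'v : (i' : ℕ) = i.val + 1 := rfl
    have hzero : ∀ b, b ≠ i' → Omega S i b * Omega S b j = 0 := by
      intro b hb
      have : Omega S i b = 0 := by
        simp only [Omega, of_apply]
        rw [if_neg, if_neg]
        · rintro ⟨h1, h2⟩; omega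
        · rintro ⟨h1, h2⟩; exact hb (Fin.ext (by omega))
      rw [this, zero_mul]
    rw [Finset.sum_eq_single i' (fun b _ hb => hzero b hb) (by simp)]
    have h1 : Omega S i i' = 1 := by
      simp [Omega, hi2, hi'v]
    have h2 : Omega S i' j = if i = j then -1 else 0 := by
      have hodd : ((i:ℕ) + 1) % 2 = 1 := by omega
      simp only [Omega, of_apply]
      rw [if_neg (by rintro ⟨ha, hb⟩; omega)]
      by_cases hij : i = j
      · subst hij
        rw [if_pos ⟨by omega, hi2⟩, if_pos rfl]
      · rw [if_neg, if_neg hij]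
        rintro ⟨ha, hb⟩
        exact hij (Fin.ext (by omega))
    rw [h1, h2, one_mul]
  · have hi2 : i.val % 2 = 1 := Nat.odd_iff.mp hi
    have hpos : 0 < i.val := by omega
    have hlt : i.val - 1 < 2 * S := by omega
    have hi2S := i.isLt
    set i' : Fin (2 * S) := ⟨i.val - 1, hlt⟩ with hi'
    have hi'v : (i' : ℕ) = i.val - 1 := rfl
    have hzero : ∀ b, b ≠ i' → Omega S i b * Omega S b j = 0 := by
      intro b hb
      have : Omega S i b = 0 := by
        simp only [Omega, of_apply]
        rw [if_neg, if_neg]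
        · rintro ⟨h1, h2⟩; exact hb (Fin.ext (by omega))
        · rintro ⟨h1, h2⟩; omega
      rw [this, zero_mul]
    rw [Finset.sum_eq_single i' (fun b _ hb => hzero b hb) (by simp)]
    have h1 : Omega S i i' = -1 := by
      simp only [Omega, of_apply]
      rw [if_neg (by rintro ⟨ha, hb⟩; omega),
        if_pos (show (i':ℕ) + 1 = (i:ℕ) ∧ (i':ℕ) % 2 = 0 from ⟨by omega, by omega⟩)]
    have h2 : Omega S i' j = if i = j then 1 else 0 := by
      simp only [Omega, of_apply]
      by_cases hij : i = j
      · subst hij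
        rw [if_pos (show (i':ℕ) + 1 = (i:ℕ) ∧ (i':ℕ) % 2 = 0 from
            ⟨by omega, by omega⟩), if_pos rfl]
      · rw [if_neg, if_neg, if_neg hij]
        · rintro ⟨ha, hb⟩; omega
        · rintro ⟨ha, hb⟩; exact hij (Fin.ext (by omega))
    rw [h1, h2]
    split_ifs <;> norm_num

lemma vmv_negr (a b : Fin n → ℝ) : vecMulVec a (-b) = -vecMulVec a b := by
  ext i j; simp [vecMulVec_apply]

lemma omega_mulVec_mulVec (S : ℕ) (w : Fin (2*S) → ℝ) :
    Omega S *ᵥ (Omega S *ᵥ w) = -w := by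
  rw [mulVec_mulVec, omega_mul_omega, neg_mulVec, one_mulVec]

lemma omega_vecMul (S : ℕ) (w : Fin (2*S) → ℝ) :
    w ᵥ* Omega S = -(Omega S *ᵥ w) := by
  rw [← mulVec_transpose, omega_transpose, neg_mulVec]

lemma omega_anti (S : ℕ) (w : Fin (2*S) → ℝ) : w ⬝ᵥ (Omega S *ᵥ w) = 0 := by
  have h1 := dotProduct_mulVec w (Omega S) w
  rw [omega_vecMul, neg_dotProduct, dotProduct_comm] at h1
  rw [dotProduct_comm]
  linarith

lemma omega_iso (S : ℕ) (w z : Fin (2*S) → ℝ) :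
    (Omega S *ᵥ w) ⬝ᵥ (Omega S *ᵥ z) = w ⬝ᵥ z := by
  rw [dotProduct_mulVec, omega_vecMul, omega_mulVec_mulVec, neg_neg]

set_option maxHeartbeats 1000000 in
lemma exists_V (S : ℕ) (δ v : Fin (2*S) → ℝ) (hδ : δ ⬝ᵥ δ = 1) (hv : v ⬝ᵥ v = 1) :
    ∃ V : Matrix (Fin (2*S)) (Fin (2*S)) ℝ,
      Vᵀ * V = 1 ∧ V * Omega S = Omega S * V ∧ V *ᵥ δ = v := by
  set J := Omega S with hJdef
  have hJT : Jᵀ = -J := omega_transpose S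
  have hJJ : J * J = -1 := omega_mul_omega S
  have hJJv : ∀ w : Fin (2*S) → ℝ, J *ᵥ (J *ᵥ w) = -w := omega_mulVec_mulVec S
  -- scalars
  set a : ℝ := δ ⬝ᵥ v with ha
  set b : ℝ := δ ⬝ᵥ (J *ᵥ v) with hb
  set ρ : ℝ := Real.sqrt (a^2 + b^2) with hρdef
  have hρ0 : 0 ≤ ρ := Real.sqrt_nonneg _
  have hρ2 : ρ^2 = a^2 + b^2 := Real.sq_sqrt (by positivity)
  set x : ℝ := if ρ = 0 then 1 else a/ρ with hx
  set y : ℝ := if ρ = 0 then 0 else b/ρ with hy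
  have hab0 : ρ = 0 → a = 0 ∧ b = 0 := by
    intro h; rw [h] at hρ2; constructor <;> nlinarith
  have hxy : x^2 + y^2 = 1 := by
    by_cases h : ρ = 0
    · simp [hx, hy, h]
    · rw [hx, hy, if_neg h, if_neg h]; field_simp; linarith [hρ2]
  have hr1 : x*a + y*b = ρ := by
    by_cases h : ρ = 0
    · obtain ⟨h1, h2⟩ := hab0 h; rw [h1, h2, h]; ring
    · rw [hx, hy, if_neg h, if_neg h]; field_simp; linarith [hρ2]
  have hr2 : x*b - y*a = 0 := by
    by_cases h : ρ = 0
    · obtain ⟨h1, h2⟩ := hab0 h; rw [h1, h2]; ring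
    · rw [hx, hy, if_neg h, if_neg h]; field_simp; ring
  -- vectors
  set u : Fin (2*S) → ℝ := δ + x • v + y • (J *ᵥ v) with hu
  -- primitive dot products
  have d2 : v ⬝ᵥ δ = a := by rw [dotProduct_comm]
  have d3 : (J *ᵥ v) ⬝ᵥ δ = b := by rw [dotProduct_comm]
  have d5 : v ⬝ᵥ (J *ᵥ v) = 0 := omega_anti S v
  have d5' : (J *ᵥ v) ⬝ᵥ v = 0 := by rw [dotProduct_comm]; exact d5
  have d6 : (J *ᵥ v) ⬝ᵥ (J *ᵥ v) = 1 := by rw [omega_iso]; exact hv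
  have d7' : (J *ᵥ δ) ⬝ᵥ δ = 0 := by rw [dotProduct_comm]; exact omega_anti S δ
  -- derived dot products
  have hudotδ : u ⬝ᵥ δ = 1 + ρ := by
    rw [hu]
    simp only [add_dotProduct, smul_dotProduct, smul_eq_mul, hδ, d2, d3]
    linarith [hr1]
  have hJu : J *ᵥ u = J *ᵥ δ + x • (J *ᵥ v) - y • v := by
    rw [hu]
    simp only [mulVec_add, mulVec_smul, hJJv]
    module
  have hJudotδ : (J *ᵥ u) ⬝ᵥ δ = 0 := by
    rw [hJu]
    simp only [sub_dotProduct, add_dotProduct, smul_dotProduct, smul_eq_mul, d7', d3, d2]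
    linarith [hr2]
  have huu : u ⬝ᵥ u = 2 + 2*ρ := by
    rw [hu]
    simp only [add_dotProduct, dotProduct_add, smul_dotProduct, dotProduct_smul,
      smul_eq_mul, hδ, d2, d3, d5, d5', d6, hv]
    rw [ha, hb] at hr1 ⊢
    nlinarith [hr1, hxy]
  have hanti_u : u ⬝ᵥ (J *ᵥ u) = 0 := omega_anti S u
  have hanti_u' : (J *ᵥ u) ⬝ᵥ u = 0 := by rw [dotProduct_comm]; exact hanti_u
  have hJuJu : (J *ᵥ u) ⬝ᵥ (J *ᵥ u) = 2 + 2*ρ := by rw [omega_iso]; exact huu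
  -- matrices
  set P : Matrix (Fin (2*S)) (Fin (2*S)) ℝ :=
    vecMulVec u u + vecMulVec (J *ᵥ u) (J *ᵥ u) with hP
  set κ : ℝ := (1 + ρ)⁻¹ with hκ
  have h1ρ : (1 : ℝ) + ρ ≠ 0 := by positivity
  set H : Matrix (Fin (2*S)) (Fin (2*S)) ℝ := 1 - κ • P with hH
  set N : Matrix (Fin (2*S)) (Fin (2*S)) ℝ := (-x) • 1 + y • J with hN
  set M : Matrix (Fin (2*S)) (Fin (2*S)) ℝ := (-x) • 1 - y • J with hM
  have hNT : Nᵀ = M := by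
    rw [hN, hM, transpose_add, transpose_smul, transpose_smul, transpose_one, hJT]
    module
  have hMN : M * N = 1 := by
    rw [hM, hN]
    have : ((-x) • 1 - y • J) * ((-x) • 1 + y • J)
        = (x^2) • (1 : Matrix (Fin (2*S)) (Fin (2*S)) ℝ) - (y^2) • (J * J) := by
      simp only [sub_mul, mul_add, add_mul, smul_mul_assoc, mul_smul_comm, one_mul, mul_one,
        smul_smul]
      module
    rw [this, hJJ]
    rw [smul_neg, sub_neg_eq_add, ← add_smul, hxy, one_smul]
  have hNM : N * M = 1 := by
    rw [hN, hM]
    have : ((-x) • 1 + y • J) * ((-x) • 1 - y • J)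
        = (x^2) • (1 : Matrix (Fin (2*S)) (Fin (2*S)) ℝ) - (y^2) • (J * J) := by
      simp only [sub_mul, mul_add, add_mul, mul_sub, smul_mul_assoc, mul_smul_comm, one_mul,
        mul_one, smul_smul]
      module
    rw [this, hJJ]
    rw [smul_neg, sub_neg_eq_add, ← add_smul, hxy, one_smul]
  have hNJ : N * J = J * N := by
    rw [hN]
    simp only [add_mul, mul_add, smul_mul_assoc, mul_smul_comm, one_mul, mul_one]
  have hPT : Pᵀ = P := by
    rw [hP, transpose_add, vmv_transpose, vmv_transpose]
  have hHT : Hᵀ = H := by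
    rw [hH, transpose_sub, transpose_one, transpose_smul, hPT]
  have hPP : P * P = (2 + 2*ρ) • P := by
    rw [hP]
    simp only [add_mul, mul_add, vmv_mul_vmv, huu, hanti_u, hanti_u', hJuJu, zero_smul,
      add_zero, zero_add, smul_add]
  have hHH : H * H = 1 := by
    rw [hH]
    have expand : (1 - κ • P) * (1 - κ • P)
        = 1 - κ • P - κ • P + (κ * κ) • (P * P) := by
      simp only [sub_mul, mul_sub, one_mul, mul_one, smul_mul_assoc, mul_smul_comm, smul_smul]
      module
    rw [expand, hPP, smul_smul]
    have hk : κ * κ * (2 + 2*ρ) = κ + κ := by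
      rw [hκ]; field_simp; ring
    rw [hk]
    module
  have hPJ : P * J = J * P := by
    have e1 : P * J = vecMulVec u (-(J *ᵥ u)) + vecMulVec (J *ᵥ u) u := by
      rw [hP, add_mul, vmv_mul, vmv_mul, hJT, neg_mulVec, neg_mulVec, hJJv, neg_neg]
    have e2 : J * P = vecMulVec (J *ᵥ u) u + vecMulVec (-u) (J *ᵥ u) := by
      rw [hP, mul_add, mul_vmv, mul_vmv, hJJv]
    rw [e1, e2, vmv_negr]
    have : vecMulVec (-u) (J *ᵥ u) = -vecMulVec u (J *ᵥ u) := by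
      ext i j; simp [vecMulVec_apply]
    rw [this]
    abel
  have hHJ : H * J = J * H := by
    rw [hH, sub_mul, mul_sub, one_mul, mul_one, smul_mul_assoc, mul_smul_comm, hPJ]
  -- the matrix V
  refine ⟨N * H, ?_, ?_, ?_⟩
  · rw [transpose_mul, hHT, hNT, mul_assoc, ← mul_assoc M N H, hMN, one_mul, hHH]
  · rw [mul_assoc, hHJ, ← mul_assoc, hNJ, mul_assoc]
  · have hPδ : P *ᵥ δ = (1 + ρ) • u := by
      rw [hP, add_mulVec, vmv_mulVec, vmv_mulVec, hudotδ, hJudotδ, zero_smul, add_zero]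
    have hHδ : H *ᵥ δ = M *ᵥ v := by
      rw [hH, sub_mulVec, one_mulVec, smul_mulVec, hPδ, smul_smul, hκ,
        inv_mul_cancel₀ h1ρ, one_smul, hu, hM, sub_mulVec, smul_mulVec,
        smul_mulVec, one_mulVec]
      module
    rw [← mulVec_mulVec, hHδ, mulVec_mulVec, hNM, one_mulVec]


set_option maxHeartbeats 1000000 in
/-- Let `D = diag(c, 1, …, 1)` with `c > 0`. Then every orthogonal
conjugation of `D` is already an orthogonal symplectic conjugation of `D`: for every
real orthogonal `O` there is an orthogonal symplectic `W` with `OᵀDO = WᵀDW`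
(every orthogonal non-symplectic transform of `D` is trivial). -/
theorem one_entry_diagonal_ONS_trivial (S : ℕ) (c : ℝ) (hc : 0 < c)
    (O : Matrix (Fin (2 * S)) (Fin (2 * S)) ℝ) (hO : Oᵀ * O = 1) :
    ∃ W : Matrix (Fin (2 * S)) (Fin (2 * S)) ℝ,
      IsOrthoSymp S W ∧
      Oᵀ * Matrix.diagonal (fun j : Fin (2 * S) => if j.val = 0 then c else 1) * O =
        Wᵀ * Matrix.diagonal (fun j : Fin (2 * S) => if j.val = 0 then c else 1) * W := by
  rcases isEmpty_or_nonempty (Fin (2 * S)) with hE | hNE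
  · refine ⟨1, ⟨by simp, by simp⟩, ?_⟩
    ext i j
    exact (hE.false i).elim
  · set δ : Fin (2*S) → ℝ := fun j => if j.val = 0 then 1 else 0 with hδdef
    have hpos : 0 < 2 * S := by obtain ⟨i⟩ := hNE; exact i.pos
    set j0 : Fin (2*S) := ⟨0, hpos⟩ with hj0
    have hδδ : δ ⬝ᵥ δ = 1 := by
      have key : ∀ j, δ j * δ j = if j = j0 then (1:ℝ) else 0 := by
        intro j
        rw [hδdef]
        by_cases h : (j:ℕ) = 0
        · have hjj : j = j0 := Fin.ext h
          simp [h, hjj, hj0]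
        · have hjj : j ≠ j0 := fun hh => h (by rw [hh])
          simp [h, hjj]
      simp only [dotProduct, key]
      rw [Finset.sum_ite_eq' Finset.univ j0 (fun _ => (1:ℝ))]
      simp
    have hD : Matrix.diagonal (fun j : Fin (2*S) => if (j:ℕ) = 0 then c else 1)
        = 1 + (c - 1) • vecMulVec δ δ := by
      ext i j
      simp only [Matrix.add_apply, one_apply, Matrix.smul_apply, vecMulVec_apply, smul_eq_mul, hδdef]
      by_cases hij : i = j
      · subst hij
        rw [Matrix.diagonal_apply_eq]
        by_cases h0 : (i:ℕ) = 0 <;> simp [h0] <;> ring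
      · rw [Matrix.diagonal_apply_ne _ hij]
        have : ¬((i:ℕ) = 0 ∧ (j:ℕ) = 0) := by
          rintro ⟨h1, h2⟩; exact hij (Fin.ext (by omega))
        simp only [if_neg hij]
        by_cases h1 : (i:ℕ) = 0
        · have h2 : ¬(j:ℕ) = 0 := fun hh => this ⟨h1, hh⟩
          simp [h1, h2]
        · simp [h1]
    have hOOT : O * Oᵀ = 1 := mul_eq_one_comm.mp hO
    set v : Fin (2*S) → ℝ := Oᵀ *ᵥ δ with hvdef
    have hvv : v ⬝ᵥ v = 1 := by
      rw [hvdef, dotProduct_mulVec, vecMul_transpose, mulVec_mulVec, hOOT, one_mulVec, hδδ]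
    obtain ⟨V, hVV, hVJ, hVδ⟩ := exists_V S δ v hδδ hvv
    have hVVT : V * Vᵀ = 1 := mul_eq_one_comm.mp hVV
    have expand : ∀ A : Matrix (Fin (2*S)) (Fin (2*S)) ℝ,
        Aᵀ * (1 + (c-1) • vecMulVec δ δ) * A
          = Aᵀ * A + (c-1) • vecMulVec (Aᵀ *ᵥ δ) (Aᵀ *ᵥ δ) := by
      intro A
      rw [mul_add, add_mul, mul_one, mul_smul_comm, smul_mul_assoc, mul_vmv, vmv_mul]
    refine ⟨Vᵀ, ⟨?_, ?_⟩, ?_⟩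
    · rw [transpose_transpose]; exact hVVT
    · rw [transpose_transpose, hVJ, mul_assoc, hVVT, mul_one]
    · rw [hD, expand O, expand Vᵀ, hO, transpose_transpose, hVVT, hVδ, hvdef]
end
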